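/- arXiv:2302.09571 — 6 statements merged into one kernel-verified Lean document; each statement's English description precedes it below -/
import Mathlib

section
/- Let G be a group acting by homeomorphisms on a compact metric space X and let G₀ ≤ G be a subgroup. Denote by E(G, X) the closure of {x ↦ g·x : g ∈ G} in the product space X^X, and similarly E(G₀, X). Assume: (i) every p ∈ E(G₀, X) is a fragmented map from X to X; (ii) for every p ∈ E(G, X) and every x ∈ X the preimage p⁻¹({x}) is countable; (iii) for every x ∈ X the set {g ∈ G₀ : g·x = x} is finite. Let f : X → ℝ be a bounded function with only finitely many points of discontinuity. Then the family {x ↦ f(g·x) : g ∈ G₀} is tame: it contains no independent sequence. -/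
/-- A sequence `(f n)` of real-valued functions on `Z` is *independent* if there are
reals `a < b` such that for all disjoint finite sets `P, M ⊆ ℕ` the set
`⋂_{n ∈ P} {f n < a} ∩ ⋂_{n ∈ M} {f n > b}` is nonempty. -/
def IsIndependentSeq {Z : Type*} (f : ℕ → Z → ℝ) : Prop :=
  ∃ a b : ℝ, a < b ∧ ∀ P M : Finset ℕ, Disjoint P M →
    ((⋂ n ∈ P, {z | f n z < a}) ∩ ⋂ n ∈ M, {z | b < f n z}).Nonempty

/-- A map `p : X → X` on a metric space is *fragmented* if for every nonempty `A ⊆ X`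
and every `ε > 0` there is an open `O` with `O ∩ A ≠ ∅` and `p (O ∩ A)` `ε`-small. -/
def IsFragmentedMap {X : Type*} [MetricSpace X] (p : X → X) : Prop :=
  ∀ A : Set X, A.Nonempty → ∀ ε : ℝ, 0 < ε → ∃ O : Set X, IsOpen O ∧ (O ∩ A).Nonempty ∧
    ∀ x ∈ O ∩ A, ∀ y ∈ O ∩ A, dist (p x) (p y) ≤ ε

set_option linter.unusedSectionVars false
set_option maxHeartbeats 1000000


open Filter Topology Set

namespace Stmt12Aux

/-- Cylinder (cube) in the Cantor space determined by a finite prefix. -/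
def Cube (l : List Bool) : Set (ℕ → Bool) :=
  {ω | ∀ i : ℕ, ∀ hi : i < l.length, ω i = l[i]}

lemma cube_eq_iInter (l : List Bool) :
    Cube l = ⋂ i : Fin l.length, (fun ω : ℕ → Bool => ω i.1) ⁻¹' {l[i.1]} := by
  ext ω
  simp only [Cube, mem_setOf_eq, mem_iInter, mem_preimage, mem_singleton_iff]
  exact ⟨fun h i => h i.1 i.2, fun h i hi => h ⟨i, hi⟩⟩

lemma cube_isOpen (l : List Bool) : IsOpen (Cube l) := by
  rw [cube_eq_iInter]
  exact isOpen_iInter_of_finite fun i =>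
    (IsOpen.preimage (continuous_apply (i.1 : ℕ)) (isOpen_discrete _))

lemma cube_isClosed (l : List Bool) : IsClosed (Cube l) := by
  rw [cube_eq_iInter]
  exact isClosed_iInter fun i =>
    (IsClosed.preimage (continuous_apply (i.1 : ℕ)) (isClosed_discrete _))

lemma cube_nonempty (l : List Bool) : (Cube l).Nonempty := by
  refine ⟨fun n => if hn : n < l.length then l[n] else false, ?_⟩
  intro i hi
  simp [hi]

lemma cube_nil : Cube ([] : List Bool) = univ := by
  ext ω; simp [Cube]

lemma mem_cube_append {l : List Bool} {b : Bool} {ω : ℕ → Bool} :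
    ω ∈ Cube (l ++ [b]) ↔ ω ∈ Cube l ∧ ω l.length = b := by
  constructor
  · intro h
    refine ⟨fun i hi => ?_, ?_⟩
    · have h2 := h i (by simp; omega)
      rwa [List.getElem_append_left hi] at h2
    · have h2 := h l.length (by simp)
      simpa using h2
  · rintro ⟨h1, h2⟩
    intro i hi
    simp only [List.length_append, List.length_singleton] at hi
    rcases lt_or_eq_of_le (Nat.lt_succ_iff.mp hi) with hlt | heq
    · rw [List.getElem_append_left hlt]; exact h1 i hlt
    · subst heq
      simpa using h2

lemma cube_append_subset (l : List Bool) (b : Bool) : Cube (l ++ [b]) ⊆ Cube l :=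
  fun _ h => (mem_cube_append.1 h).1

/-- If a closed subset of Cantor space misses a point, it misses a whole cylinder
around that point. -/
lemma cyl_avoid {S : Set (ℕ → Bool)} (hS : IsClosed S) {ω₀ : ℕ → Bool} (h : ω₀ ∉ S) :
    ∃ m : ℕ, ∀ ω : ℕ → Bool, (∀ i < m, ω i = ω₀ i) → ω ∉ S := by
  have hopen : IsOpen Sᶜ := hS.isOpen_compl
  obtain ⟨I, u, hu, hsub⟩ := isOpen_pi_iff.1 hopen ω₀ h
  refine ⟨(I.sup id) + 1, fun ω hω hmem => ?_⟩
  have : ω ∈ (I : Set ℕ).pi u := by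
    intro i hi
    have hiI : i ∈ I := hi
    have : i < I.sup id + 1 := Nat.lt_succ_of_le (Finset.le_sup (f := id) hiI)
    rw [hω i this]
    exact (hu i hiI).2
  exact (hsub this) hmem



variable {X : Type*} [TopologicalSpace X] [CompactSpace X] [T2Space X]

/-- The profile space over a family of "pattern sets". -/
def Zb (CC : ℕ → Bool → Set X) (ω : ℕ → Bool) : Set X :=
  ⋂ n, closure (CC n (ω n))

def ZZ (CC : ℕ → Bool → Set X) : Set ((ℕ → Bool) × X) :=
  {q | q.2 ∈ Zb CC q.1}

lemma zz_closed (CC : ℕ → Bool → Set X) : IsClosed (ZZ CC) := by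
  have : ZZ CC = ⋂ n, (({ω : ℕ → Bool | ω n = false} ×ˢ closure (CC n false)) ∪
      ({ω : ℕ → Bool | ω n = true} ×ˢ closure (CC n true))) := by
    ext ⟨ω, z⟩
    simp only [ZZ, Zb, mem_setOf_eq, mem_iInter, mem_union, mem_prod]
    constructor
    · intro h n
      cases hc : ω n
      · left; exact ⟨rfl, by have := h n; rwa [hc] at this⟩
      · right; exact ⟨rfl, by have := h n; rwa [hc] at this⟩
    · intro h n
      rcases h n with ⟨h1, h2⟩ | ⟨h1, h2⟩ <;> rw [h1] <;> exact h2
  rw [this]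
  have hcl : ∀ (n : ℕ) (c : Bool), IsClosed {ω : ℕ → Bool | ω n = c} := by
    intro n c
    have := IsClosed.preimage (continuous_apply (A := fun _ : ℕ => Bool) n)
      (isClosed_discrete ({c} : Set Bool))
    simpa [Set.preimage] using this
  refine isClosed_iInter fun n => IsClosed.union ?_ ?_
  · exact (hcl n false).prod isClosed_closure
  · exact (hcl n true).prod isClosed_closure

/-- `W` is a minimal closed subset of `ZZ CC` projecting onto the cube `l`. -/
def MinOn (CC : ℕ → Bool → Set X) (W : Set ((ℕ → Bool) × X)) (l : List Bool) : Prop :=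
  IsClosed W ∧ W ⊆ ZZ CC ∧ Prod.fst '' W = Cube l ∧
    ∀ Y, IsClosed Y → Y ⊆ W → Prod.fst '' Y = Cube l → Y = W

lemma minOn_nonempty {CC : ℕ → Bool → Set X} {W : Set ((ℕ → Bool) × X)} {l : List Bool}
    (h : MinOn CC W l) : W.Nonempty := by
  obtain ⟨ω, hω⟩ := cube_nonempty l
  rw [← h.2.2.1] at hω
  obtain ⟨q, hq, -⟩ := hω
  exact ⟨q, hq⟩

/-- Existence of a minimal closed subset of `ZZ CC` with full projection. -/
lemma exists_min_root (CC : ℕ → Bool → Set X) (hne : ∀ ω, (Zb CC ω).Nonempty) :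
    ∃ W, MinOn CC W [] := by
  have hcubenil : Cube ([] : List Bool) = univ := by
    ext ω; simp [Cube]
  let S : Set (Set ((ℕ → Bool) × X)) :=
    {W | IsClosed W ∧ W ⊆ ZZ CC ∧ Prod.fst '' W = Cube []}
  have hZS : ZZ CC ∈ S := by
    refine ⟨zz_closed CC, subset_rfl, ?_⟩
    rw [hcubenil]
    apply eq_univ_of_forall
    intro ω
    obtain ⟨z, hz⟩ := hne ω
    exact ⟨(ω, z), hz, rfl⟩
  have hchain : ∀ c ⊆ S, IsChain (· ⊆ ·) c → c.Nonempty →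
      ∃ lb ∈ S, ∀ s ∈ c, lb ⊆ s := by
    intro c hcS hchain hcne
    refine ⟨⋂₀ c, ⟨?_, ?_, ?_⟩, fun s hs => sInter_subset_of_mem hs⟩
    · exact isClosed_sInter fun W hW => (hcS hW).1
    · obtain ⟨W₀, hW₀⟩ := hcne
      exact (sInter_subset_of_mem hW₀).trans (hcS hW₀).2.1
    · rw [hcubenil]
      apply eq_univ_of_forall
      intro ω
      haveI : Nonempty c := hcne.to_subtype
      have key : (⋂ W : c, ((W : Set ((ℕ → Bool) × X)) ∩ (Prod.fst ⁻¹' {ω}))).Nonempty := by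
        apply IsCompact.nonempty_iInter_of_directed_nonempty_isCompact_isClosed
        · intro W W'
          rcases hchain.total W.2 W'.2 with h | h
          · exact ⟨W, subset_rfl, inter_subset_inter_left _ h⟩
          · exact ⟨W', inter_subset_inter_left _ h, subset_rfl⟩
        · intro W
          have : ω ∈ Prod.fst '' (W : Set ((ℕ → Bool) × X)) := by
            rw [(hcS W.2).2.2, hcubenil]; trivial
          obtain ⟨q, hq, hq2⟩ := this
          exact ⟨q, hq, by simp [hq2]⟩
        · intro W
          exact ((hcS W.2).1.inter
            (IsClosed.preimage continuous_fst isClosed_singleton)).isCompact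
        · intro W
          exact (hcS W.2).1.inter
            (IsClosed.preimage continuous_fst isClosed_singleton)
      obtain ⟨q, hq⟩ := key
      simp only [mem_iInter, mem_inter_iff, mem_preimage, mem_singleton_iff] at hq
      obtain ⟨W₀, hW₀⟩ := hcne
      have hq1 : q ∈ ⋂₀ c := by
        intro W hW
        exact (hq ⟨W, hW⟩).1
      exact ⟨q, hq1, (hq ⟨W₀, hW₀⟩).2⟩
  obtain ⟨m, -, hmS, hmin⟩ := zorn_superset_nonempty S hchain (ZZ CC) hZS
  refine ⟨m, hmS.1, hmS.2.1, hmS.2.2, fun Y h1 h2 h3 => ?_⟩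
  have : Y ∈ S := ⟨h1, h2.trans hmS.2.1, h3⟩
  exact subset_antisymm h2 (hmin this h2)

/-- Minimality is inherited by cutting with a sub-cube (after checking full projection). -/
lemma minOn_inherit {CC : ℕ → Bool → Set X} {W : Set ((ℕ → Bool) × X)} {l l₂ : List Bool}
    (hW : MinOn CC W l) (hsub : Cube l₂ ⊆ Cube l)
    (hproj : Prod.fst '' (W ∩ (Cube l₂ ×ˢ univ)) = Cube l₂) :
    MinOn CC (W ∩ (Cube l₂ ×ˢ univ)) l₂ := by
  obtain ⟨hWc, hWZ, hWp, hWmin⟩ := hW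
  have hcl2 : IsClosed (Cube l₂ ×ˢ (univ : Set X)) := (cube_isClosed l₂).prod isClosed_univ
  refine ⟨hWc.inter hcl2, (inter_subset_left).trans hWZ, hproj, ?_⟩
  intro Y hYc hYsub hYproj
  set Y' : Set ((ℕ → Bool) × X) := Y ∪ (W \ (Cube l₂ ×ˢ univ)) with hY'def
  have hY'c : IsClosed Y' := by
    refine hYc.union (hWc.inter ?_)
    have : IsOpen (Cube l₂ ×ˢ (univ : Set X)) := (cube_isOpen l₂).prod isOpen_univ
    exact this.isClosed_compl
  have hY'W : Y' ⊆ W := by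
    rintro q (hq | hq)
    · exact (hYsub hq).1
    · exact hq.1
  have hY'proj : Prod.fst '' Y' = Cube l := by
    apply subset_antisymm
    · rw [← hWp]; exact image_mono hY'W
    · intro ω hω
      by_cases hω2 : ω ∈ Cube l₂
      · rw [← hYproj] at hω2
        obtain ⟨q, hq, hq2⟩ := hω2
        exact ⟨q, Or.inl hq, hq2⟩
      · rw [← hWp] at hω
        obtain ⟨q, hq, hq2⟩ := hω
        refine ⟨q, Or.inr ⟨hq, ?_⟩, hq2⟩
        intro hmem
        exact hω2 (hq2 ▸ hmem.1)
  have hY'eq : Y' = W := hWmin Y' hY'c hY'W hY'proj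
  apply subset_antisymm hYsub
  intro q hq
  have hqY' : q ∈ Y' := hY'eq ▸ hq.1
  rcases hqY' with h | h
  · exact h
  · exact absurd hq.2 h.2

lemma minOn_split {CC : ℕ → Bool → Set X} {W : Set ((ℕ → Bool) × X)} {l : List Bool}
    (hW : MinOn CC W l) (b : Bool) :
    MinOn CC (W ∩ (Cube (l ++ [b]) ×ˢ univ)) (l ++ [b]) := by
  apply minOn_inherit hW (cube_append_subset l b)
  apply subset_antisymm
  · rintro ω ⟨q, ⟨-, hq2⟩, rfl⟩
    exact hq2.1
  · intro ω hω
    have : ω ∈ Cube l := cube_append_subset l b hω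
    rw [← hW.2.2.1] at this
    obtain ⟨q, hq, hq2⟩ := this
    refine ⟨q, ⟨hq, Set.mem_prod.2 ⟨?_, trivial⟩⟩, hq2⟩
    rw [hq2]; exact hω

/-- The key "capture" lemma: any open set `O` of `X` touching a minimal set `W`
captures all fibers over a whole subcube. -/
lemma minOn_refine {CC : ℕ → Bool → Set X} {W : Set ((ℕ → Bool) × X)} {l : List Bool}
    (hW : MinOn CC W l) {O : Set X} (hO : IsOpen O)
    (hWO : (W ∩ (univ ×ˢ O)).Nonempty) :
    ∃ l₂, MinOn CC (W ∩ (Cube l₂ ×ˢ univ)) l₂ ∧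
      ∀ q ∈ W ∩ (Cube l₂ ×ˢ univ), q.2 ∈ O := by
  obtain ⟨hWc, hWZ, hWp, hWmin⟩ := hW
  set Y : Set ((ℕ → Bool) × X) := W \ (univ ×ˢ O) with hYdef
  have hYc : IsClosed Y := hWc.inter (IsOpen.isClosed_compl (isOpen_univ.prod hO))
  have hYW : Y ⊆ W := fun q hq => hq.1
  have hYne : Y ≠ W := by
    intro h
    obtain ⟨q, hqW, hqO⟩ := hWO
    have : q ∈ Y := h ▸ hqW
    exact this.2 hqO
  have hprojY : ¬ (Prod.fst '' Y = Cube l) := by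
    intro h
    exact hYne (hWmin Y hYc hYW h)
  have hprojYsub : Prod.fst '' Y ⊆ Cube l := by
    rw [← hWp]; exact image_mono hYW
  have hprojYclosed : IsClosed (Prod.fst '' Y) :=
    (hYc.isCompact.image continuous_fst).isClosed
  obtain ⟨ω₀, hω₀l, hω₀Y⟩ : ∃ ω₀, ω₀ ∈ Cube l ∧ ω₀ ∉ Prod.fst '' Y := by
    by_contra h
    push_neg at h
    exact hprojY (subset_antisymm hprojYsub h)
  obtain ⟨m, hm⟩ := cyl_avoid hprojYclosed hω₀Y
  set L : ℕ := max m l.length with hLdef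
  set l₂ : List Bool := List.ofFn (fun i : Fin L => ω₀ i) with hl₂def
  have hl₂len : l₂.length = L := by simp [hl₂def]
  have hl₂get : ∀ i (hi : i < l₂.length), l₂[i] = ω₀ i := by
    intro i hi
    simp [hl₂def]
  have hcubesub : Cube l₂ ⊆ Cube l := by
    intro ω hω i hi
    have hiL : i < l₂.length := by rw [hl₂len]; exact lt_of_lt_of_le hi (le_max_right _ _)
    rw [hω i hiL, hl₂get i hiL]
    exact hω₀l i hi
  have hcapture : ∀ ω ∈ Cube l₂, ∀ z, (ω, z) ∈ W → z ∈ O := by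
    intro ω hω z hz
    have hωY : ω ∉ Prod.fst '' Y := by
      apply hm
      intro i hi
      have hiL : i < l₂.length := by rw [hl₂len]; exact lt_of_lt_of_le hi (le_max_left _ _)
      rw [hω i hiL, hl₂get i hiL]
    by_contra hzO
    exact hωY ⟨(ω, z), ⟨hz, fun hmem => hzO hmem.2⟩, rfl⟩
  have hproj : Prod.fst '' (W ∩ (Cube l₂ ×ˢ univ)) = Cube l₂ := by
    apply subset_antisymm
    · rintro ω ⟨q, ⟨-, hq2⟩, rfl⟩
      exact hq2.1
    · intro ω hω
      have hωl : ω ∈ Cube l := hcubesub hω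
      rw [← hWp] at hωl
      obtain ⟨q, hq, hq2⟩ := hωl
      refine ⟨q, ⟨hq, Set.mem_prod.2 ⟨?_, trivial⟩⟩, hq2⟩
      rw [hq2]; exact hω
  refine ⟨l₂, minOn_inherit ⟨hWc, hWZ, hWp, hWmin⟩ hcubesub hproj, ?_⟩
  rintro ⟨ω, z⟩ ⟨hqW, hq2⟩
  exact hcapture ω hq2.1 z hqW

lemma uncountable_cantor : ¬ Countable (ℕ → Bool) := by
  intro h
  obtain ⟨e, he⟩ := Countable.exists_injective_nat (ℕ → Bool)
  classical
  have hinj : Function.Injective (fun s : Set ℕ => e (fun n => decide (n ∈ s))) := by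
    intro s t hst
    have h2 := he hst
    ext n
    simpa using congrFun h2 n
  exact Function.cantor_injective _ hinj

/-- From a minimal set one can extract a point of either color avoiding the bad set. -/
lemma minOn_color {X : Type*} [TopologicalSpace X] [CompactSpace X] [T2Space X]
    (CC : ℕ → Bool → Set X) (p : X → X) (f : X → ℝ) (a b : ℝ) (hab : a < b)
    (D : Set X) (h : ℕ → X → X) (U : Ultrafilter ℕ)
    (hUf : ∀ s : Set ℕ, s.Finite → s ∉ U)
    (hp : ∀ x, Tendsto (fun n => h n x) (U : Filter ℕ) (𝓝 (p x)))
    (hDc : ∀ x, x ∉ D → ContinuousAt f x)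
    (hBc : (p ⁻¹' D).Countable)
    (hNf : ∀ z, {n | h n z ∈ D}.Finite)
    (hslack : ∀ n (c : Bool) z, z ∈ closure (CC n c) → h n z ∉ D →
      (c = false → f (h n z) ≤ a) ∧ (c = true → b ≤ f (h n z)))
    {W : Set ((ℕ → Bool) × X)} {l : List Bool} (hW : MinOn CC W l) (cT : Bool) :
    ∃ u ω, (ω, u) ∈ W ∧ (cT = false → f (p u) ≤ a) ∧ (cT = true → b ≤ f (p u)) := by
  classical
  -- almost disjoint family of infinite subsets of [l.length, ∞)
  set enc : ℕ → (ℕ → Bool) → ℕ :=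
    fun k σ => l.length + Encodable.encode (List.ofFn fun i : Fin k => σ i) with hencdef
  set T : (ℕ → Bool) → Set ℕ := fun σ => Set.range (fun k => enc k σ) with hTdef
  have hTge : ∀ σ n, n ∈ T σ → l.length ≤ n := by
    rintro σ n ⟨k, rfl⟩
    exact Nat.le_add_right _ _
  have henceq : ∀ (k k' : ℕ) (σ τ : ℕ → Bool), enc k σ = enc k' τ →
      k = k' ∧ ∀ i, i < k → σ i = τ i := by
    intro k k' σ τ hkk
    have h1 : Encodable.encode (List.ofFn fun i : Fin k => σ i) =
        Encodable.encode (List.ofFn fun i : Fin k' => τ i) := by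
      simpa [hencdef] using hkk
    have h2 := Encodable.encode_injective h1
    have hlen : k = k' := by
      have := congrArg List.length h2
      simpa using this
    subst hlen
    refine ⟨rfl, fun i hi => ?_⟩
    have h3 := List.ofFn_injective h2
    exact congrFun h3 ⟨i, hi⟩
  have hTinj : ∀ σ, Function.Injective (fun k => enc k σ) := by
    intro σ k k' hkk
    exact (henceq k k' σ σ hkk).1
  have hTinf : ∀ σ, (T σ).Infinite := fun σ => Set.infinite_range_of_injective (hTinj σ)
  have hTint : ∀ σ τ : ℕ → Bool, σ ≠ τ → (T σ ∩ T τ).Finite := by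
    intro σ τ hστ
    obtain ⟨i₀, hi₀⟩ : ∃ i, σ i ≠ τ i := by
      by_contra hc
      push_neg at hc
      exact hστ (funext hc)
    have hsub : T σ ∩ T τ ⊆ (fun k => enc k σ) '' (Set.Iic i₀) := by
      rintro n ⟨⟨k, rfl⟩, ⟨k', hk'⟩⟩
      obtain ⟨hkk', hagree⟩ := henceq k' k τ σ hk'
      refine ⟨k, ?_, rfl⟩
      simp only [Set.mem_Iic]
      by_contra hk
      push_neg at hk
      exact hi₀ ((hagree i₀ (by omega)).symm)
    exact (Set.Finite.image _ (Set.finite_Iic i₀)).subset hsub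
  -- the candidate patterns
  set pat : (ℕ → Bool) → (ℕ → Bool) :=
    fun σ n => if hn : n < l.length then l[n] else (if n ∈ T σ then !cT else cT)
    with hpatdef
  have hpatcube : ∀ σ, pat σ ∈ Cube l := by
    intro σ i hi
    simp [hpatdef, hi]
  have hpatT : ∀ σ n, n ∈ T σ → pat σ n = !cT := by
    intro σ n hn
    have := hTge σ n hn
    simp [hpatdef, Nat.not_lt_of_le this, hn]
  have hpatnT : ∀ σ n, l.length ≤ n → n ∉ T σ → pat σ n = cT := by
    intro σ n h1 h2
    simp [hpatdef, Nat.not_lt_of_le h1, h2]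
  have hbad : {σ : ℕ → Bool | T σ ∈ U}.Subsingleton := by
    intro σ hσ τ hτ
    by_contra hστ
    have := Filter.inter_mem hσ hτ
    exact hUf _ (hTint σ τ hστ) this
  have hmainU : ∀ σ, T σ ∉ U → {n | pat σ n = cT} ∈ U := by
    intro σ hσ
    have hsub : {n | pat σ n = cT}ᶜ ⊆ (Set.Iio l.length) ∪ T σ := by
      intro n hn
      simp only [mem_compl_iff, mem_setOf_eq] at hn
      by_contra hc
      simp only [mem_union, Set.mem_Iio, not_or, not_lt] at hc
      exact hn (hpatnT σ n hc.1 hc.2)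
    have hnotU : {n | pat σ n = cT}ᶜ ∉ U := by
      intro hmem
      have : (Set.Iio l.length) ∪ T σ ∈ U := Filter.mem_of_superset hmem hsub
      rcases (Ultrafilter.union_mem_iff.1 this) with h | h
      · exact hUf _ (Set.finite_Iio _) h
      · exact hσ h
    have := (Ultrafilter.compl_mem_iff_notMem (s := {n | pat σ n = cT}ᶜ)).2 hnotU
    rwa [compl_compl] at this
  -- fibers
  have hfib : ∀ σ, ∃ z, (pat σ, z) ∈ W := by
    intro σ
    have : pat σ ∈ Prod.fst '' W := by rw [hW.2.2.1]; exact hpatcube σ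
    obtain ⟨q, hq, hq2⟩ := this
    exact ⟨q.2, by rwa [← hq2, Prod.mk.eta]⟩
  have hdisj : ∀ σ τ : ℕ → Bool, σ ≠ τ → ∀ z, (pat σ, z) ∈ W → (pat τ, z) ∈ W → False := by
    intro σ τ hστ z h1 h2
    have hz1 : z ∈ Zb CC (pat σ) := hW.2.1 h1
    have hz2 : z ∈ Zb CC (pat τ) := hW.2.1 h2
    have hbig : ((T σ \ T τ) \ {n | h n z ∈ D}).Infinite := by
      have : (T σ \ T τ).Infinite := by
        have : T σ \ T τ ⊇ T σ \ (T σ ∩ T τ) := fun n hn => ⟨hn.1, fun hc => hn.2 ⟨hn.1, hc⟩⟩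
        exact Set.Infinite.mono this ((hTinf σ).diff (hTint σ τ hστ))
      exact this.diff (hNf z)
    obtain ⟨n, ⟨hnσ, hnτ⟩, hnD⟩ := hbig.nonempty
    have e1 : pat σ n = !cT := hpatT σ n hnσ
    have e2 : pat τ n = cT := hpatnT τ n (hTge σ n hnσ) hnτ
    have s1 := hslack n (pat σ n) z (by exact Set.mem_iInter.1 hz1 n) hnD
    have s2 := hslack n (pat τ n) z (by exact Set.mem_iInter.1 hz2 n) hnD
    cases cT
    · have hb := s1.2 (by simp [e1])
      have ha := s2.1 (by simpa using e2)
      linarith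
    · have ha := s1.1 (by simp [e1])
      have hb := s2.2 (by simpa using e2)
      linarith
  -- find a good pattern avoiding the countable bad set
  have hgood : ∃ σ, T σ ∉ U ∧ ∃ z, (pat σ, z) ∈ W ∧ p z ∉ D := by
    by_contra hc
    push_neg at hc
    choose zc hzc using hfib
    have hmapsto : ∀ σ ∈ {σ : ℕ → Bool | T σ ∉ U}, zc σ ∈ p ⁻¹' D := by
      intro σ hσ
      exact hc σ hσ (zc σ) (hzc σ)
    have hinj : Set.InjOn zc {σ : ℕ → Bool | T σ ∉ U} := by
      intro σ hσ τ hτ heq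
      by_contra hστ
      exact hdisj σ τ hστ (zc σ) (hzc σ) (heq ▸ hzc τ)
    have hcnt : ({σ : ℕ → Bool | T σ ∉ U}).Countable := by
      have hcD : Countable (p ⁻¹' D) := hBc.to_subtype
      have hinj2 : Function.Injective
          (fun σ : {σ : ℕ → Bool | T σ ∉ U} => (⟨zc σ, hmapsto σ σ.2⟩ : p ⁻¹' D)) := by
        intro x y hxy
        exact Subtype.ext (hinj x.2 y.2 (by simpa using hxy))
      have := hinj2.countable
      exact Set.countable_coe_iff.mp this
    have : (Set.univ : Set (ℕ → Bool)).Countable := by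
      have : (Set.univ : Set (ℕ → Bool)) ⊆
          {σ : ℕ → Bool | T σ ∉ U} ∪ {σ : ℕ → Bool | T σ ∈ U} := by
        intro σ _
        by_cases h : T σ ∈ U
        · exact Or.inr h
        · exact Or.inl h
      exact ((hcnt.union hbad.countable)).mono this
    rw [Set.countable_univ_iff] at this
    exact uncountable_cantor this
  obtain ⟨σ, hσU, u, huW, hpuD⟩ := hgood
  refine ⟨u, pat σ, huW, ?_, ?_⟩ <;> intro hcT
  all_goals {
    have hu : u ∈ Zb CC (pat σ) := hW.2.1 huW
    have hS : {n | pat σ n = cT} ∩ {n | h n u ∈ D}ᶜ ∈ U := by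
      refine Filter.inter_mem (hmainU σ hσU) ?_
      have := (Ultrafilter.compl_mem_iff_notMem (s := {n | h n u ∈ D})).2 (hUf _ (hNf u))
      exact this
    have hval : ∀ n ∈ ({n | pat σ n = cT} ∩ {n | h n u ∈ D}ᶜ),
        (cT = false → f (h n u) ≤ a) ∧ (cT = true → b ≤ f (h n u)) := by
      rintro n ⟨hn1, hn2⟩
      have := hslack n (pat σ n) u (Set.mem_iInter.1 hu n) hn2
      rw [hn1] at this
      exact this
    have htend : Tendsto (fun n => f (h n u)) (U : Filter ℕ) (𝓝 (f (p u))) :=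
      ((hDc _ hpuD).tendsto).comp (hp u)
    subst hcT
    first
      | exact le_of_tendsto htend (Filter.mem_of_superset hS
          (fun n hn => (hval n hn).1 rfl))
      | exact ge_of_tendsto htend (Filter.mem_of_superset hS
          (fun n hn => (hval n hn).2 rfl))
  }

lemma minOn_step {X : Type*} [MetricSpace X] [CompactSpace X]
    (CC : ℕ → Bool → Set X) (p : X → X)
    (hfrag : ∀ A : Set X, A.Nonempty → ∀ ε : ℝ, 0 < ε → ∃ O : Set X, IsOpen O ∧
      (O ∩ A).Nonempty ∧ ∀ x ∈ O ∩ A, ∀ y ∈ O ∩ A, dist (p x) (p y) ≤ ε)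
    (f : X → ℝ) (a b : ℝ) (hab : a < b)
    (D : Set X) (h : ℕ → X → X) (U : Ultrafilter ℕ)
    (hUf : ∀ s : Set ℕ, s.Finite → s ∉ U)
    (hp : ∀ x, Tendsto (fun n => h n x) (U : Filter ℕ) (𝓝 (p x)))
    (hDc : ∀ x, x ∉ D → ContinuousAt f x)
    (hBc : (p ⁻¹' D).Countable)
    (hNf : ∀ z, {n | h n z ∈ D}.Finite)
    (hslack : ∀ n (c : Bool) z, z ∈ closure (CC n c) → h n z ∉ D →
      (c = false → f (h n z) ≤ a) ∧ (c = true → b ≤ f (h n z)))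
    {W : Set ((ℕ → Bool) × X)} {l : List Bool} (hW : MinOn CC W l)
    (ε : ℝ) (hε : 0 < ε) :
    ∃ Wl : Set ((ℕ → Bool) × X) × List Bool, ∃ u v : X,
      MinOn CC Wl.1 Wl.2 ∧ Wl.1 ⊆ W ∧
      (∀ q ∈ Wl.1, dist (p u) (p q.2) ≤ ε) ∧ f (p u) ≤ a ∧
      (∀ q ∈ Wl.1, dist (p v) (p q.2) ≤ ε) ∧ b ≤ f (p v) := by
  have hAne : (Prod.snd '' W).Nonempty := (minOn_nonempty hW).image _
  obtain ⟨O, hOopen, hOA, hOd⟩ := hfrag (Prod.snd '' W) hAne ε hε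
  have hWO : (W ∩ (univ ×ˢ O)).Nonempty := by
    obtain ⟨x, hxO, q, hqW, hq2⟩ := hOA
    exact ⟨q, hqW, Set.mem_prod.2 ⟨trivial, by rw [hq2]; exact hxO⟩⟩
  obtain ⟨l₂, hmin2, hO2⟩ := minOn_refine hW hOopen hWO
  set W₂ := W ∩ (Cube l₂ ×ˢ univ) with hW₂def
  have hmemA : ∀ q ∈ W₂, q.2 ∈ O ∩ (Prod.snd '' W) := by
    intro q hq
    exact ⟨hO2 q hq, ⟨q, hq.1, rfl⟩⟩
  obtain ⟨u, ωu, huW, hua, -⟩ := minOn_color CC p f a b hab D h U hUf hp hDc hBc hNf hslack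
    hmin2 false
  obtain ⟨v, ωv, hvW, -, hvb⟩ := minOn_color CC p f a b hab D h U hUf hp hDc hBc hNf hslack
    hmin2 true
  refine ⟨(W₂, l₂), u, v, hmin2, inter_subset_left, ?_, hua rfl, ?_, hvb rfl⟩
  · intro q hq
    exact hOd _ (hmemA _ huW) _ (hmemA q hq)
  · intro q hq
    exact hOd _ (hmemA _ hvW) _ (hmemA q hq)

/-- The main abstract contradiction. -/
lemma key {X : Type*} [MetricSpace X] [CompactSpace X]
    (CC : ℕ → Bool → Set X) (p : X → X)
    (hfrag : ∀ A : Set X, A.Nonempty → ∀ ε : ℝ, 0 < ε → ∃ O : Set X, IsOpen O ∧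
      (O ∩ A).Nonempty ∧ ∀ x ∈ O ∩ A, ∀ y ∈ O ∩ A, dist (p x) (p y) ≤ ε)
    (f : X → ℝ) (a b : ℝ) (hab : a < b)
    (D : Set X) (h : ℕ → X → X) (U : Ultrafilter ℕ)
    (hUf : ∀ s : Set ℕ, s.Finite → s ∉ U)
    (hp : ∀ x, Tendsto (fun n => h n x) (U : Filter ℕ) (𝓝 (p x)))
    (hDc : ∀ x, x ∉ D → ContinuousAt f x)
    (hBc : (p ⁻¹' D).Countable)
    (hNf : ∀ z, {n | h n z ∈ D}.Finite)
    (hslack : ∀ n (c : Bool) z, z ∈ closure (CC n c) → h n z ∉ D →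
      (c = false → f (h n z) ≤ a) ∧ (c = true → b ≤ f (h n z)))
    (hZne : ∀ ω, (Zb CC ω).Nonempty) : False := by
  classical
  obtain ⟨W₀, hW₀⟩ := exists_min_root CC hZne
  -- difference of profiles at a coordinate forces membership in `D`
  have hZdiffD : ∀ (ω ω' : ℕ → Bool) (z : X) (c : ℕ), z ∈ Zb CC ω → z ∈ Zb CC ω' →
      ω c ≠ ω' c → h c z ∈ D := by
    intro ω ω' z c hz hz' hne
    by_contra hD
    have s1 := hslack c (ω c) z (Set.mem_iInter.1 hz c) hD
    have s2 := hslack c (ω' c) z (Set.mem_iInter.1 hz' c) hD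
    cases hc : ω c <;> cases hc' : ω' c
    · exact hne (hc.trans hc'.symm)
    · rw [hc] at s1; rw [hc'] at s2
      have h1 := s1.1 rfl
      have h2 := s2.2 rfl
      linarith
    · rw [hc] at s1; rw [hc'] at s2
      have h1 := s1.2 rfl
      have h2 := s2.1 rfl
      linarith
    · exact hne (hc.trans hc'.symm)
  -- step function via choice
  have hstep : ∀ (W : Set ((ℕ → Bool) × X)) (l : List Bool), MinOn CC W l → ∀ m : ℕ,
      ∃ Wl : Set ((ℕ → Bool) × X) × List Bool, ∃ u v : X,
        MinOn CC Wl.1 Wl.2 ∧ Wl.1 ⊆ W ∧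
        (∀ q ∈ Wl.1, dist (p u) (p q.2) ≤ 1 / (m + 1)) ∧ f (p u) ≤ a ∧
        (∀ q ∈ Wl.1, dist (p v) (p q.2) ≤ 1 / (m + 1)) ∧ b ≤ f (p v) := by
    intro W l hW m
    exact minOn_step CC p hfrag f a b hab D h U hUf hp hDc hBc hNf hslack hW
      (1 / (m + 1)) (by positivity)
  choose stepWl stepu stepv stepmin stepsub stepdu stepfu stepdv stepfv using hstep
  -- the tree of nodes
  let PN := {Wl : Set ((ℕ → Bool) × X) × List Bool // MinOn CC Wl.1 Wl.2}
  let root : PN := ⟨(W₀, []), hW₀⟩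
  let nxt : PN → ℕ → PN := fun ν m => ⟨stepWl ν.1.1 ν.1.2 ν.2 m, stepmin ν.1.1 ν.1.2 ν.2 m⟩
  let child : PN → ℕ → Bool → PN := fun ν m bo =>
    ⟨((nxt ν m).1.1 ∩ (Cube ((nxt ν m).1.2 ++ [bo]) ×ˢ univ), (nxt ν m).1.2 ++ [bo]),
      minOn_split (nxt ν m).2 bo⟩
  obtain ⟨FF, hFFnil, hFFcons⟩ : ∃ FF : List Bool → PN, FF [] = root ∧
      ∀ bo path, FF (bo :: path) = child (FF path) path.length bo :=
    ⟨fun path => List.rec root (fun bo tail ih => child ih tail.length bo) path,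
      rfl, fun _ _ => rfl⟩
  obtain ⟨PP, hPPnil, hPPcons⟩ : ∃ PP : (ℕ → Bool) → ℕ → List Bool,
      (∀ β, PP β 0 = []) ∧ ∀ β m, PP β (m + 1) = β m :: PP β m :=
    ⟨fun β => Nat.rec [] (fun m ih => β m :: ih), fun _ => rfl, fun _ _ => rfl⟩
  have hPPlen : ∀ β m, (PP β m).length = m := by
    intro β m
    induction m with
    | zero => rw [hPPnil]; rfl
    | succ m ih => rw [hPPcons]; simp [ih]
  -- the decreasing chain of sets along a branch
  have hnodesucc : ∀ β m, (FF (PP β (m + 1))).1.1 =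
      (nxt (FF (PP β m)) m).1.1 ∩ (Cube ((nxt (FF (PP β m)) m).1.2 ++ [β m]) ×ˢ univ) := by
    intro β m
    rw [hPPcons, hFFcons, hPPlen]
  have hdec : ∀ β m, (FF (PP β (m + 1))).1.1 ⊆ (FF (PP β m)).1.1 := by
    intro β m
    rw [hnodesucc]
    exact inter_subset_left.trans (stepsub _ _ _ m)
  have hq : ∀ β : ℕ → Bool, ∃ q : (ℕ → Bool) × X, ∀ m, q ∈ (FF (PP β m)).1.1 := by
    intro β
    have := IsCompact.nonempty_iInter_of_sequence_nonempty_isCompact_isClosed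
      (fun m => (FF (PP β m)).1.1) (hdec β) (fun m => minOn_nonempty (FF (PP β m)).2)
      ((FF (PP β 0)).2.1.isCompact) (fun m => (FF (PP β m)).2.1)
    obtain ⟨q, hq⟩ := this
    exact ⟨q, fun m => Set.mem_iInter.1 hq m⟩
  choose qb hqb using hq
  -- every branch point maps into D under p
  have hzD : ∀ β, p ((qb β).2) ∈ D := by
    intro β
    by_contra hc
    have hfc : ContinuousAt f (p ((qb β).2)) := hDc _ hc
    set ub : ℕ → X := fun m => stepu (FF (PP β m)).1.1 (FF (PP β m)).1.2 (FF (PP β m)).2 m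
    set vb : ℕ → X := fun m => stepv (FF (PP β m)).1.1 (FF (PP β m)).1.2 (FF (PP β m)).2 m
    have hqmem : ∀ m, qb β ∈ (nxt (FF (PP β m)) m).1.1 := by
      intro m
      have := hqb β (m + 1)
      rw [hnodesucc] at this
      exact this.1
    have hdu : ∀ m, dist (p (ub m)) (p ((qb β).2)) ≤ 1 / (m + 1) := by
      intro m
      exact stepdu _ _ _ m _ (hqmem m)
    have hdv : ∀ m, dist (p (vb m)) (p ((qb β).2)) ≤ 1 / (m + 1) := by
      intro m
      exact stepdv _ _ _ m _ (hqmem m)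
    have hlim : ∀ w : ℕ → X, (∀ m, dist (p (w m)) (p ((qb β).2)) ≤ 1 / (m + 1)) →
        Tendsto (fun m => f (p (w m))) atTop (𝓝 (f (p ((qb β).2)))) := by
      intro w hw
      have h0 : Tendsto (fun m : ℕ => dist (p (w m)) (p ((qb β).2))) atTop (𝓝 0) := by
        apply squeeze_zero (fun m => dist_nonneg) hw
        exact tendsto_one_div_add_atTop_nhds_zero_nat
      have h1 : Tendsto (fun m => p (w m)) atTop (𝓝 (p ((qb β).2))) :=
        tendsto_iff_dist_tendsto_zero.2 h0
      exact hfc.tendsto.comp h1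
    have hle : f (p ((qb β).2)) ≤ a :=
      le_of_tendsto (hlim ub hdu) (Eventually.of_forall fun m => stepfu _ _ _ m)
    have hge : b ≤ f (p ((qb β).2)) :=
      ge_of_tendsto (hlim vb hdv) (Eventually.of_forall fun m => stepfv _ _ _ m)
    linarith
  -- fibers of β ↦ (qb β).2 are finite
  have hfibfin : ∀ z : X, {β : ℕ → Bool | (qb β).2 = z}.Finite := by
    intro z
    have hNzf := hNf z
    have hkey : ∀ β β' : ℕ → Bool, (qb β).2 = z → (qb β').2 = z → β ≠ β' →
        ∃ c ∈ {n | h n z ∈ D}, (qb β).1 c ≠ (qb β').1 c := by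
      intro β β' hz hz' hne
      have hex : ∃ m, β m ≠ β' m := by
        by_contra hcon
        push_neg at hcon
        exact hne (funext hcon)
      set m₀ := Nat.find hex with hm₀def
      have hm₀ : β m₀ ≠ β' m₀ := Nat.find_spec hex
      have hagree : ∀ i < m₀, β i = β' i := by
        intro i hi
        by_contra hcon
        exact Nat.find_min hex hi hcon
      have hPPeqgen : ∀ (γ γ' : ℕ → Bool) (m : ℕ), (∀ i < m, γ i = γ' i) →
          PP γ m = PP γ' m := by
        intro γ γ' m
        induction m with
        | zero => intro _; rw [hPPnil, hPPnil]
        | succ m ih =>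
          intro hag
          rw [hPPcons, hPPcons, hag m (Nat.lt_succ_self m),
            ih (fun i hi => hag i (Nat.lt_succ_of_lt hi))]
      have hPPeq : PP β m₀ = PP β' m₀ := hPPeqgen β β' m₀ hagree
      set L := (nxt (FF (PP β m₀)) m₀).1.2 with hLdef
      have hcube : ∀ (γ : ℕ → Bool), PP γ m₀ = PP β m₀ →
          (qb γ).1 ∈ Cube ((nxt (FF (PP β m₀)) m₀).1.2 ++ [γ m₀]) := by
        intro γ hγ
        have := hqb γ (m₀ + 1)
        rw [hnodesucc, hγ] at this
        exact this.2.1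
      have h1 := mem_cube_append.1 (hcube β rfl)
      have h2 := mem_cube_append.1 (hcube β' hPPeq.symm)
      refine ⟨L.length, ?_, ?_⟩
      · -- the divergence coordinate lies in the bad set of z
        have hzZ : z ∈ Zb CC ((qb β).1) := by
          have := (FF (PP β 0)).2.2.1 (hqb β 0)
          rw [← hz]
          exact this
        have hzZ' : z ∈ Zb CC ((qb β').1) := by
          have := (FF (PP β' 0)).2.2.1 (hqb β' 0)
          rw [← hz']
          exact this
        refine hZdiffD _ _ _ _ hzZ hzZ' ?_
        rw [h1.2, h2.2]
        exact hm₀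
      · rw [h1.2, h2.2]
        exact hm₀
    have hinj : Set.InjOn (fun β : ℕ → Bool => fun n : hNzf.toFinset => (qb β).1 n)
        {β : ℕ → Bool | (qb β).2 = z} := by
      intro β hβ β' hβ' heq
      by_contra hne
      obtain ⟨c, hcD, hcval⟩ := hkey β β' hβ hβ' hne
      have : (qb β).1 c = (qb β').1 c := by
        have := congrFun heq ⟨c, hNzf.mem_toFinset.2 hcD⟩
        simpa using this
      exact hcval this
    have hfin : ((fun β : ℕ → Bool => fun n : hNzf.toFinset => (qb β).1 n) ''
        {β : ℕ → Bool | (qb β).2 = z}).Finite := Set.toFinite _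
    exact Set.Finite.of_finite_image hfin hinj
  -- conclusion: Cantor space would be countable
  have huniv : (Set.univ : Set (ℕ → Bool)) ⊆
      ⋃ z ∈ p ⁻¹' D, {β : ℕ → Bool | (qb β).2 = z} := by
    intro β _
    exact Set.mem_biUnion (hzD β) rfl
  have hcnt : (Set.univ : Set (ℕ → Bool)).Countable :=
    ((Set.Countable.biUnion hBc) fun z _ => (hfibfin z).countable).mono huniv
  exact uncountable_cantor (Set.countable_univ_iff.mp hcnt)

end Stmt12Aux

theorem stmt12 {G X : Type*} [Group G] [MetricSpace X] [CompactSpace X] [MulAction G X]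
    (hcont : ∀ g : G, Continuous fun x : X => g • x) (G₀ : Subgroup G)
    -- (i) every element of `E(G₀, X)` is a fragmented map (tameness of `(G₀, X)`)
    (hi : ∀ p ∈ closure (Set.range fun g : G₀ => fun x : X => (g : G) • x),
      IsFragmentedMap p)
    -- (ii) every element of `E(G, X)` has countable fibers
    (hii : ∀ p ∈ closure (Set.range fun g : G => fun x : X => g • x),
      ∀ x : X, (p ⁻¹' {x}).Countable)
    -- (iii) stabilizers in `G₀` are finite
    (hiii : ∀ x : X, {g : G | g ∈ G₀ ∧ g • x = x}.Finite)
    (f : X → ℝ) (hfbdd : ∃ C : ℝ, ∀ x : X, |f x| ≤ C)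
    (hfdisc : {x : X | ¬ ContinuousAt f x}.Finite) :
    -- then `{x ↦ f(g•x) : g ∈ G₀}` contains no independent sequence
    ¬ ∃ g : ℕ → G, (∀ n, g n ∈ G₀) ∧ IsIndependentSeq fun n (x : X) => f (g n • x) := by
  classical
  rintro ⟨g, hgmem, hseq⟩
  obtain ⟨a, b, hab, hind⟩ := hseq
  set D : Set X := {x : X | ¬ ContinuousAt f x} with hDdef
  -- the sequence g is injective
  have ginj : Function.Injective g := by
    intro n m hnm
    by_contra hne
    obtain ⟨x, hx1, hx2⟩ := hind {n} {m} (Finset.disjoint_singleton.2 hne)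
    have h1 : f (g n • x) < a := by
      have := Set.mem_iInter₂.1 hx1 n (Finset.mem_singleton_self n)
      exact this
    have h2 : b < f (g m • x) := by
      have := Set.mem_iInter₂.1 hx2 m (Finset.mem_singleton_self m)
      exact this
    rw [hnm] at h1
    linarith
  -- finitely many indices hit the discontinuity set at any point
  have hNf : ∀ z : X, {n : ℕ | g n • z ∈ D}.Finite := by
    intro z
    have hsub : {n : ℕ | g n • z ∈ D} ⊆ ⋃ d ∈ D, {n : ℕ | g n • z = d} := by
      intro n hn
      exact Set.mem_biUnion hn rfl
    refine Set.Finite.subset (hfdisc.biUnion fun d _ => ?_) hsub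
    by_cases hne : {n : ℕ | g n • z = d}.Nonempty
    · obtain ⟨n₀, hn₀⟩ := hne
      have hinj : Set.InjOn (fun n => (g n₀)⁻¹ * g n) {n | g n • z = d} := by
        intro i _ j _ hij
        exact ginj (mul_left_cancel hij)
      have hmaps : ((fun n => (g n₀)⁻¹ * g n) '' {n | g n • z = d}) ⊆
          {γ : G | γ ∈ G₀ ∧ γ • z = z} := by
        rintro γ ⟨i, hi, rfl⟩
        refine ⟨mul_mem (inv_mem (hgmem n₀)) (hgmem i), ?_⟩
        have h1 : g i • z = d := hi
        have h2 : g n₀ • z = d := hn₀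
        rw [mul_smul, h1, ← h2, inv_smul_smul]
      exact Set.Finite.of_finite_image ((hiii z).subset hmaps) hinj
    · rw [Set.not_nonempty_iff_eq_empty] at hne
      rw [hne]
      exact Set.finite_empty
  -- ultrafilter limit of the sequence of maps
  set U : Ultrafilter ℕ := Filter.hyperfilter ℕ with hUdef
  have hUf : ∀ s : Set ℕ, s.Finite → s ∉ U := fun s hs => hs.notMem_hyperfilter
  have hplim : ∀ x : X, ∃ y : X, Filter.Tendsto (fun n => g n • x) (U : Filter ℕ) (𝓝 y) := by
    intro x
    rcases isCompact_univ.ultrafilter_le_nhds (U.map fun n => g n • x) (by simp) with ⟨y, -, hy⟩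
    exact ⟨y, hy⟩
  choose p hp using hplim
  have hptend : Filter.Tendsto (fun n => fun x : X => g n • x) (U : Filter ℕ) (𝓝 p) :=
    tendsto_pi_nhds.2 hp
  have hpE0 : p ∈ closure (Set.range fun g' : G₀ => fun x : X => (g' : G) • x) :=
    mem_closure_of_tendsto hptend
      (Filter.Eventually.of_forall fun n => ⟨⟨g n, hgmem n⟩, rfl⟩)
  have hpE : p ∈ closure (Set.range fun g' : G => fun x : X => g' • x) :=
    mem_closure_of_tendsto hptend
      (Filter.Eventually.of_forall fun n => ⟨g n, rfl⟩)
  have hfrag := hi p hpE0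
  have hBc : (p ⁻¹' D).Countable := by
    have heq : p ⁻¹' D = ⋃ d ∈ D, p ⁻¹' {d} := by
      ext x
      simp
    rw [heq]
    exact Set.Countable.biUnion hfdisc.countable fun d _ => hii p hpE d
  -- pattern sets
  set CC : ℕ → Bool → Set X :=
    fun n c => if c then {x : X | b < f (g n • x)} else {x : X | f (g n • x) < a} with hCCdef
  have hCCfalse : ∀ n, CC n false = {x : X | f (g n • x) < a} := fun n => if_neg (by simp)
  have hCCtrue : ∀ n, CC n true = {x : X | b < f (g n • x)} := fun n => if_pos rfl
  have hsel : ∀ (s : Finset ℕ) (ω : ℕ → Bool), (⋂ n ∈ s, CC n (ω n)).Nonempty := by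
    intro s ω
    obtain ⟨x, hx1, hx2⟩ := hind (s.filter fun n => ω n = false) (s.filter fun n => ω n = true)
      (by
        rw [Finset.disjoint_left]
        intro n hn hm
        simp only [Finset.mem_filter] at hn hm
        rw [hn.2] at hm
        exact Bool.false_ne_true hm.2)
    refine ⟨x, Set.mem_iInter₂.2 fun n hn => ?_⟩
    cases hc : ω n
    · rw [hCCfalse]
      exact Set.mem_iInter₂.1 hx1 n (Finset.mem_filter.2 ⟨hn, hc⟩)
    · rw [hCCtrue]
      exact Set.mem_iInter₂.1 hx2 n (Finset.mem_filter.2 ⟨hn, hc⟩)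
  have hZne : ∀ ω : ℕ → Bool, (Stmt12Aux.Zb CC ω).Nonempty := by
    intro ω
    have hne : (⋂ s : Finset ℕ, closure (⋂ n ∈ s, CC n (ω n))).Nonempty := by
      apply IsCompact.nonempty_iInter_of_directed_nonempty_isCompact_isClosed
      · intro s t
        refine ⟨s ∪ t, ?_, ?_⟩ <;> apply closure_mono <;> intro x hx <;>
          refine Set.mem_iInter₂.2 fun n hn => Set.mem_iInter₂.1 hx n ?_
        · exact Finset.mem_union_left t hn
        · exact Finset.mem_union_right s hn
      · intro s
        exact (hsel s ω).closure
      · intro s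
        exact isClosed_closure.isCompact
      · intro s
        exact isClosed_closure
    obtain ⟨x, hx⟩ := hne
    refine ⟨x, Set.mem_iInter.2 fun n => ?_⟩
    have h1 := Set.mem_iInter.1 hx {n}
    have h2 : closure (⋂ n' ∈ ({n} : Finset ℕ), CC n' (ω n')) ⊆ closure (CC n (ω n)) := by
      apply closure_mono
      intro y hy
      exact Set.mem_iInter₂.1 hy n (Finset.mem_singleton_self n)
    exact h2 h1
  have hslack : ∀ (n : ℕ) (c : Bool) (z : X), z ∈ closure (CC n c) →
      (fun n (x : X) => g n • x) n z ∉ D →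
      (c = false → f ((fun n (x : X) => g n • x) n z) ≤ a) ∧
      (c = true → b ≤ f ((fun n (x : X) => g n • x) n z)) := by
    intro n c z hz hD2
    have hcz : ContinuousAt f (g n • z) := not_not.1 hD2
    have hat : Filter.Tendsto (fun x : X => f (g n • x)) (𝓝 z) (𝓝 (f (g n • z))) :=
      hcz.tendsto.comp ((hcont (g n)).tendsto z)
    constructor <;> intro hc <;> subst hc
    · rw [hCCfalse] at hz
      by_contra hgt
      push_neg at hgt
      have hev : {x : X | f (g n • x) ∈ Set.Ioi a} ∈ 𝓝 z := hat (Ioi_mem_nhds hgt)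
      obtain ⟨y, hy1, hy2⟩ := mem_closure_iff_nhds.1 hz _ hev
      have : a < f (g n • y) := hy1
      have : f (g n • y) < a := hy2
      linarith
    · rw [hCCtrue] at hz
      by_contra hgt
      push_neg at hgt
      have hev : {x : X | f (g n • x) ∈ Set.Iio b} ∈ 𝓝 z := hat (Iio_mem_nhds hgt)
      obtain ⟨y, hy1, hy2⟩ := mem_closure_iff_nhds.1 hz _ hev
      have : f (g n • y) < b := hy1
      have : b < f (g n • y) := hy2
      linarith
  exact Stmt12Aux.key CC p hfrag f a b hab D (fun n (x : X) => g n • x) U hUf hp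
    (fun x hx => not_not.1 hx) hBc hNf hslack hZne
end

section
/- Let 0 = c₀ < c₁ < ⋯ < c_d < c_{d+1} = 1 determine the partition of the circle 𝕋 = ℝ/ℤ into the arcs [c_i, c_{i+1}), i = 0, …, d, and let f : 𝕋 → {0, …, d} be the coloring map with f(t) = i exactly when t lies in the arc [c_i, c_{i+1}). Fix α₁, …, α_k ∈ 𝕋 and z ∈ 𝕋, and define the multidimensional Sturmian-like coding function φ : ℤ^k → ℝ by φ(n₁, …, n_k) = f(z + n₁α₁ + ⋯ + n_kα_k). Then φ is a tame function on the discrete group ℤ^k; in particular, the family of translates {m ↦ φ(m + n) : n ∈ ℤ^k} of real-valued functions on ℤ^k contains no independent sequence. -/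
namespace Stmt14Aux

noncomputable def lft (u : AddCircle (1:ℝ)) : ℝ := ((AddCircle.equivIco 1 0) u : ℝ)

lemma lft_mem (u : AddCircle (1:ℝ)) : lft u ∈ Set.Ico (0:ℝ) 1 := by
  have := ((AddCircle.equivIco (1:ℝ) 0) u).2
  simpa [lft] using this

lemma lft_coe (u : AddCircle (1:ℝ)) : ((lft u : ℝ) : AddCircle (1:ℝ)) = u :=
  (AddCircle.equivIco (1:ℝ) 0).symm_apply_apply u

lemma lft_eq_self {x : ℝ} (h : x ∈ Set.Ico (0:ℝ) 1) : lft (x : AddCircle (1:ℝ)) = x := by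
  have h1 := lft_coe (x : AddCircle (1:ℝ))
  have h2 := lft_mem (x : AddCircle (1:ℝ))
  rwa [AddCircle.coe_eq_coe_iff_of_mem_Ico
    (show lft ((x:ℝ) : AddCircle (1:ℝ)) ∈ Set.Ico (0:ℝ) (0+1) by simpa using h2)
    (show x ∈ Set.Ico (0:ℝ) (0+1) by simpa using h)] at h1

lemma int_small {r : ℝ} (h : ((r : ℝ) : AddCircle (1:ℝ)) = 0) (h1 : -2 < r) (h2 : r < 1) :
    r = 0 ∨ r = -1 := by
  rcases (AddCircle.coe_eq_zero_iff (1:ℝ)).mp h with ⟨n, hn⟩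
  have hr : (n : ℝ) = r := by simpa using hn
  have a1 : (-2:ℝ) < (n:ℝ) := by rw [hr]; exact h1
  have a2 : (n:ℝ) < 1 := by rw [hr]; exact h2
  have b1 : (-2:ℤ) < n := by exact_mod_cast a1
  have b2 : n < 1 := by exact_mod_cast a2
  interval_cases n
  · right; rw [← hr]; norm_num
  · left; rw [← hr]; norm_num

lemma exists_color {d : ℕ} {c : Fin (d+2) → ℝ} (hmono : StrictMono c)
    (hc0 : c 0 = 0) (hc1 : c (Fin.last (d+1)) = 1) {x : ℝ} (h0 : 0 ≤ x) (h1 : x < 1) :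
    ∃ i : Fin (d+1), c i.castSucc ≤ x ∧ x < c i.succ := by
  classical
  set T : Finset (Fin (d+2)) := Finset.univ.filter (fun j => c j ≤ x) with hT
  have h0T : (0 : Fin (d+2)) ∈ T := by simp [hT, hc0, h0]
  have hTne : T.Nonempty := ⟨0, h0T⟩
  have hj0T : T.max' hTne ∈ T := T.max'_mem hTne
  have hj0le : c (T.max' hTne) ≤ x := by
    simpa [hT] using hj0T
  have hj0ne : T.max' hTne ≠ Fin.last (d+1) := by
    intro h; rw [h, hc1] at hj0le; linarith
  obtain ⟨i, hi⟩ := Fin.exists_castSucc_eq.mpr hj0ne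
  refine ⟨i, by rw [hi]; exact hj0le, ?_⟩
  by_contra h
  push_neg at h
  have hmem : i.succ ∈ T := by simp [hT, h]
  have hle := T.le_max' _ hmem
  have hlt : T.max' hTne < i.succ := by rw [← hi]; exact Fin.castSucc_lt_succ (i := i)
  exact absurd hle (not_le.mpr hlt)

lemma const_between {d : ℕ} {c : Fin (d+2) → ℝ} (hmono : StrictMono c)
    (hc0 : c 0 = 0) (hc1 : c (Fin.last (d+1)) = 1)
    {f : AddCircle (1:ℝ) → ℝ}
    (hf : ∀ i : Fin (d+1), ∀ t : ℝ, c i.castSucc ≤ t → t < c i.succ →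
      f (t : AddCircle (1:ℝ)) = (i : ℕ))
    (t : AddCircle (1:ℝ)) {x₁ x₂ : ℝ} (h0 : 0 ≤ x₁) (h12 : x₁ ≤ x₂) (h2 : x₂ < 1)
    (hNB : ∀ i : Fin (d+1), lft (((c i.castSucc : ℝ) : AddCircle (1:ℝ)) - t) ∉ Set.Ioc x₁ x₂) :
    f ((x₁ : AddCircle (1:ℝ)) + t) = f ((x₂ : AddCircle (1:ℝ)) + t) := by
  set u₁ : AddCircle (1:ℝ) := (x₁ : AddCircle (1:ℝ)) + t with hu₁
  set u₂ : AddCircle (1:ℝ) := (x₂ : AddCircle (1:ℝ)) + t with hu₂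
  have hm1 := lft_mem u₁
  have hm2 := lft_mem u₂
  have e1 : ((lft u₁ : ℝ) : AddCircle (1:ℝ)) = u₁ := lft_coe u₁
  have e2 : ((lft u₂ : ℝ) : AddCircle (1:ℝ)) = u₂ := lft_coe u₂
  obtain ⟨i, hi1, hi2⟩ := exists_color hmono hc0 hc1 hm1.1 hm1.2
  have hfu₁ : f u₁ = (i : ℕ) := by rw [← e1]; exact hf i _ hi1 hi2
  have hcoe : ((lft u₂ - lft u₁ - (x₂ - x₁) : ℝ) : AddCircle (1:ℝ)) = 0 := by
    rw [AddCircle.coe_sub, AddCircle.coe_sub, AddCircle.coe_sub, e1, e2, hu₁, hu₂]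
    abel
  rcases int_small hcoe (by cases hm1 with | intro a b => cases hm2 with | intro a' b' => linarith)
      (by cases hm1 with | intro a b => cases hm2 with | intro a' b' => linarith) with hcase | hcase
  · -- lft u₂ = lft u₁ + (x₂ - x₁)
    have hrel : lft u₂ = lft u₁ + (x₂ - x₁) := by linarith
    rcases lt_or_ge (lft u₂) (c i.succ) with hlt | hge
    · have hfu₂ : f u₂ = (i : ℕ) := by
        rw [← e2]; exact hf i _ (by linarith) hlt
      rw [hfu₁, hfu₂]
    · -- crossed boundary: contradiction
      exfalso
      obtain ⟨i', hi'⟩ : ∃ i' : Fin (d+1),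
          ((c i'.castSucc : ℝ) : AddCircle (1:ℝ)) = ((c i.succ : ℝ) : AddCircle (1:ℝ)) := by
        rcases eq_or_ne i.succ (Fin.last (d+1)) with hlast | hlast
        · refine ⟨0, ?_⟩
          rw [hlast, hc1]
          have : ((0:Fin (d+1)).castSucc : Fin (d+2)) = 0 := rfl
          rw [this, hc0]
          simp [AddCircle.coe_period]
        · obtain ⟨i', hi'⟩ := Fin.exists_castSucc_eq.mpr hlast
          exact ⟨i', by rw [hi']⟩
      set v : ℝ := x₁ + (c i.succ - lft u₁) with hv
      have hv1 : x₁ < v := by simp [hv]; linarith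
      have hv2 : v ≤ x₂ := by simp [hv]; linarith
      have hvmem : v ∈ Set.Ico (0:ℝ) 1 := ⟨by linarith, by linarith⟩
      have hvcoe : ((v : ℝ) : AddCircle (1:ℝ)) = ((c i.succ : ℝ) : AddCircle (1:ℝ)) - t := by
        have : v = c i.succ - (lft u₁ - x₁) := by rw [hv]; ring
        rw [this, AddCircle.coe_sub, AddCircle.coe_sub, e1, hu₁]
        abel
      apply hNB i'
      rw [hi', ← hvcoe, lft_eq_self hvmem]
      exact ⟨hv1, hv2⟩
  · -- wrap-around: contradiction
    exfalso
    have hrel : lft u₂ = lft u₁ + (x₂ - x₁) - 1 := by linarith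
    set v : ℝ := x₁ + (1 - lft u₁) with hv
    have hv1 : x₁ < v := by simp [hv]; linarith [hm1.2]
    have hv2 : v ≤ x₂ := by simp [hv]; linarith [hm2.1]
    have hvmem : v ∈ Set.Ico (0:ℝ) 1 := ⟨by linarith, by linarith⟩
    have hvcoe : ((v : ℝ) : AddCircle (1:ℝ))
        = ((c (0 : Fin (d+1)).castSucc : ℝ) : AddCircle (1:ℝ)) - t := by
      have h00 : ((0:Fin (d+1)).castSucc : Fin (d+2)) = 0 := rfl
      rw [h00, hc0]
      have : v = 1 - (lft u₁ - x₁) := by rw [hv]; ring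
      rw [this, AddCircle.coe_sub, AddCircle.coe_sub, e1, hu₁, AddCircle.coe_period]
      have hz : ((0:ℝ) : AddCircle (1:ℝ)) = 0 := by norm_num
      rw [hz]
      abel
    apply hNB 0
    rw [← hvcoe, lft_eq_self hvmem]
    exact ⟨hv1, hv2⟩

lemma pow_big (d : ℕ) : 4 * (d+2) * (d+1) + 1 < 2 ^ (4*(d+2)) := by
  have h : d + 2 < 2 ^ (d+2) := Nat.lt_two_pow_self
  have h4 : (d+2)^4 ≤ (2^(d+2))^4 := Nat.pow_le_pow_left h.le 4
  have he : 2 ^ (4*(d+2)) = (2^(d+2))^4 := by rw [mul_comm, pow_mul]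
  rw [he]
  have hp : 4 * (d+2) * (d+1) + 1 < (d+2)^4 := by
    have h1 : 4 * (d+2) * (d+1) + 1 < 4 * ((d+2) * (d+2)) := by nlinarith
    have h2 : 4 ≤ (d+2) * (d+2) := by nlinarith
    calc 4 * (d+2) * (d+1) + 1 < 4 * ((d+2) * (d+2)) := h1
      _ ≤ ((d+2) * (d+2)) * ((d+2) * (d+2)) := Nat.mul_le_mul_right _ h2
      _ = (d+2)^4 := by ring
  exact lt_of_lt_of_le hp h4

end Stmt14Aux

open Stmt14Aux in
theorem stmt14 (d k : ℕ)
    -- the partition points `0 = c₀ < c₁ < ⋯ < c_d < c_{d+1} = 1`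
    (c : Fin (d + 2) → ℝ) (hmono : StrictMono c)
    (hc0 : c 0 = 0) (hc1 : c (Fin.last (d + 1)) = 1)
    -- the coloring `f : 𝕋 → {0, …, d}` with `f t = i` exactly when `t ∈ [c_i, c_{i+1})`
    (f : AddCircle (1 : ℝ) → ℝ)
    (hf : ∀ i : Fin (d + 1), ∀ t : ℝ, c i.castSucc ≤ t → t < c i.succ →
      f (t : AddCircle (1 : ℝ)) = (i : ℕ))
    (α : Fin k → AddCircle (1 : ℝ)) (z : AddCircle (1 : ℝ)) :
    -- the family of translates of the coding function `φ(n) = f(z + n₁α₁ + ⋯ + n_kα_k)`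
    -- on `ℤ^k` contains no independent sequence
    ¬ ∃ s : ℕ → (Fin k → ℤ), IsIndependentSeq fun j (m : Fin k → ℤ) =>
        f (z + ∑ i, (m i + s j i) • α i) := by
  classical
  rintro ⟨s, a, b, hab, hind⟩
  set N := 4 * (d + 2) with hN
  set t : ℕ → AddCircle (1:ℝ) := fun j => z + ∑ i, (s j i) • α i with ht
  have key : ∀ (m : Fin k → ℤ) (j : ℕ),
      z + ∑ i, (m i + s j i) • α i = (∑ i, (m i) • α i) + t j := by
    intro m j
    simp only [ht, add_zsmul, Finset.sum_add_distrib]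
    abel
  -- witnesses from independence
  have hw : ∀ M : Finset ℕ, M ⊆ Finset.range N → ∃ m : Fin k → ℤ,
      (∀ j ∈ Finset.range N, j ∉ M → f (z + ∑ i, (m i + s j i) • α i) < a) ∧
      (∀ j ∈ M, b < f (z + ∑ i, (m i + s j i) • α i)) := by
    intro M hM
    obtain ⟨m, hm1, hm2⟩ := hind (Finset.range N \ M) M Finset.sdiff_disjoint
    refine ⟨m, ?_, ?_⟩
    · intro j hj hjM
      simp only [Set.mem_iInter, Set.mem_setOf_eq] at hm1
      exact hm1 j (Finset.mem_sdiff.mpr ⟨hj, hjM⟩)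
    · intro j hj
      simp only [Set.mem_iInter, Set.mem_setOf_eq] at hm2
      exact hm2 j hj
  choose! w hw1 hw2 using hw
  -- the finite set of breakpoints
  set B : Finset ℝ := insert 0 ((Finset.univ : Finset (Fin (d+1) × Fin N)).image
      (fun q => lft (((c q.1.castSucc : ℝ) : AddCircle (1:ℝ)) - t (q.2 : ℕ)))) with hB
  have hBcard : B.card ≤ (d+1) * N + 1 := by
    have h1 := Finset.card_insert_le (0:ℝ) ((Finset.univ : Finset (Fin (d+1) × Fin N)).image
      (fun q => lft (((c q.1.castSucc : ℝ) : AddCircle (1:ℝ)) - t (q.2 : ℕ))))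
    have h2 := Finset.card_image_le (s := (Finset.univ : Finset (Fin (d+1) × Fin N)))
      (f := fun q => lft (((c q.1.castSucc : ℝ) : AddCircle (1:ℝ)) - t (q.2 : ℕ)))
    have h3 : (Finset.univ : Finset (Fin (d+1) × Fin N)).card = (d+1) * N := by
      simp [Finset.card_univ]
    rw [hB]
    omega
  set G : ℝ → (Fin N → ℝ) := fun x j => f ((x : AddCircle (1:ℝ)) + t (j : ℕ)) with hG
  set F : Finset (Fin N → ℝ) := B.image G with hF
  have hFcard : F.card ≤ (d+1) * N + 1 := le_trans (Finset.card_image_le) hBcard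
  -- every coding vector lies in F
  have hmem : ∀ m : Fin k → ℤ,
      (fun j : Fin N => f (z + ∑ i, (m i + s (j : ℕ) i) • α i)) ∈ F := by
    intro m
    set y : AddCircle (1:ℝ) := ∑ i, (m i) • α i with hy
    have hxm := lft_mem y
    have h0B : (0:ℝ) ∈ B.filter (· ≤ lft y) := by
      simp [hB, hxm.1]
    set T := B.filter (· ≤ lft y) with hT
    have hTne : T.Nonempty := ⟨0, h0B⟩
    set v := T.max' hTne with hv
    have hvT := T.max'_mem hTne
    have hvB : v ∈ B := (Finset.mem_filter.mp hvT).1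
    have hvx : v ≤ lft y := (Finset.mem_filter.mp hvT).2
    have hv0 : 0 ≤ v := T.le_max' 0 h0B
    have heq : (fun j : Fin N => f (z + ∑ i, (m i + s (j : ℕ) i) • α i)) = G v := by
      funext j
      rw [key m (j : ℕ)]
      have hyx : ((lft y : ℝ) : AddCircle (1:ℝ)) = y := lft_coe y
      rw [← hy, ← hyx]
      refine (const_between hmono hc0 hc1 hf (t (j:ℕ)) hv0 hvx hxm.2 ?_).symm
      intro i hi
      have hiB : lft (((c i.castSucc : ℝ) : AddCircle (1:ℝ)) - t (j:ℕ)) ∈ B := by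
        rw [hB]
        exact Finset.mem_insert_of_mem
          (Finset.mem_image.mpr ⟨(i, j), Finset.mem_univ _, rfl⟩)
      have hmemT : lft (((c i.castSucc : ℝ) : AddCircle (1:ℝ)) - t (j:ℕ)) ∈ T :=
        Finset.mem_filter.mpr ⟨hiB, hi.2⟩
      have hle := T.le_max' _ hmemT
      rw [← hv] at hle
      exact absurd hle (not_le.mpr hi.1)
    rw [heq]
    exact Finset.mem_image.mpr ⟨v, hvB, rfl⟩
  -- injectivity of the pattern map
  have hcard : 2 ^ N ≤ (d+1) * N + 1 := by
    have h1 : (Finset.range N).powerset.card ≤ F.card := by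
      apply Finset.card_le_card_of_injOn
        (fun M => fun j : Fin N => f (z + ∑ i, (w M i + s (j : ℕ) i) • α i))
      · intro M hM
        exact hmem (w M)
      · intro M₁ h₁ M₂ h₂ heq
        simp only [Finset.coe_powerset, Set.mem_preimage, Set.mem_powerset_iff,
          Finset.coe_subset, Finset.mem_coe, Finset.mem_powerset] at h₁ h₂
        by_contra hne
        obtain ⟨j, hj⟩ : ∃ j, (j ∈ M₁ ∧ j ∉ M₂) ∨ (j ∈ M₂ ∧ j ∉ M₁) := by
          by_contra hc
          push_neg at hc
          apply hne
          ext j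
          have h1 := hc j
          tauto
        rcases hj with ⟨hj1, hj2⟩ | ⟨hj1, hj2⟩
        · have hjN : j ∈ Finset.range N := h₁ hj1
          have hjFin : j < N := Finset.mem_range.mp hjN
          have e := congrFun heq ⟨j, hjFin⟩
          have hb := hw2 M₁ h₁ j hj1
          have ha := hw1 M₂ h₂ j hjN hj2
          simp only at e
          rw [e] at hb
          linarith
        · have hjN : j ∈ Finset.range N := h₂ hj1
          have hjFin : j < N := Finset.mem_range.mp hjN
          have e := congrFun heq ⟨j, hjFin⟩
          have hb := hw2 M₂ h₂ j hj1
          have ha := hw1 M₁ h₁ j hjN hj2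
          simp only at e
          rw [← e] at hb
          linarith
    rw [Finset.card_powerset, Finset.card_range] at h1
    exact le_trans h1 hFcard
  have hbig := pow_big d
  have hcomm : (d+1) * N + 1 = 4 * (d+2) * (d+1) + 1 := by rw [hN]; ring
  rw [hcomm] at hcard
  rw [hN] at hcard
  omega
end

section
/- Let G be a topological group acting continuously on compact metric spaces X and Y, and let π : X → Y be a continuous surjective G-equivariant map which is a strongly almost 1-1 extension, i.e. the set X ∖ X₀ is countable, where X₀ := {x ∈ X : π⁻¹({π(x)}) = {x}}. Assume that the G-system Y is tame, i.e. for every continuous f : Y → ℝ the family {y ↦ f(g·y) : g ∈ G} contains no independent sequence, and that for every p in the closure E(Y) of {y ↦ g·y : g ∈ G} in the product space Y^Y and every y ∈ Y the set p⁻¹({y}) is countable. Then the G-system X is tame: for every continuous f : X → ℝ the family {x ↦ f(g·x) : g ∈ G} contains no independent sequence. -/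
open Set Filter Topology

namespace GP17

/-- iterate a step relation preserving an invariant -/
lemma exists_iter {T : Type*} {Inv : T → Prop} {Rel : T → T → Prop} (i0 : T) (h0 : Inv i0)
    (hstep : ∀ x, Inv x → ∃ y, Inv y ∧ Rel x y) :
    ∃ f : ℕ → T, f 0 = i0 ∧ (∀ n, Inv (f n)) ∧ ∀ n, Rel (f n) (f (n+1)) := by
  let g : {x : T // Inv x} → {x : T // Inv x} :=
    fun x => ⟨(hstep x.1 x.2).choose, (hstep x.1 x.2).choose_spec.1⟩
  let f' : ℕ → {x : T // Inv x} := fun n => g^[n] ⟨i0, h0⟩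
  refine ⟨fun n => (f' n).1, rfl, fun n => (f' n).2, fun n => ?_⟩
  have h : f' (n+1) = g (f' n) := Function.iterate_succ_apply' g n _
  show Rel (f' n).1 (f' (n+1)).1
  rw [h]
  exact (hstep (f' n).1 (f' n).2).choose_spec.2

variable (F : Finset ℕ → Prop)

def Acc (s : Finset ℕ) (M : Set ℕ) : Prop :=
  ∀ L ⊆ M, L.Infinite → ∃ t : Finset ℕ,
    (↑t ⊆ L ∧ ∀ a ∈ t, ∀ b ∈ L, b ∉ t → a < b) ∧ F (s ∪ t)

def Rej (s : Finset ℕ) (M : Set ℕ) : Prop :=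
  ∀ L ⊆ M, L.Infinite → ¬ Acc F s L

lemma acc_mono {s M M'} (h : M' ⊆ M) (ha : Acc F s M) : Acc F s M' :=
  fun L hL => ha L (hL.trans h)

lemma rej_mono {s M M'} (h : M' ⊆ M) (ha : Rej F s M) : Rej F s M' :=
  fun L hL => ha L (hL.trans h)

lemma decideAR (s : Finset ℕ) (M : Set ℕ) (hM : M.Infinite) :
    ∃ L ⊆ M, L.Infinite ∧ (Acc F s L ∨ Rej F s L) := by
  by_cases h : ∃ L ⊆ M, L.Infinite ∧ Acc F s L
  · obtain ⟨L, h1, h2, h3⟩ := h; exact ⟨L, h1, h2, Or.inl h3⟩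
  · refine ⟨M, subset_rfl, hM, Or.inr ?_⟩
    intro L hL hLi hacc
    exact h ⟨L, hL, hLi, hacc⟩

lemma decideAR_many (SS : Finset (Finset ℕ)) (M : Set ℕ) (hM : M.Infinite) :
    ∃ L ⊆ M, L.Infinite ∧ ∀ s ∈ SS, Acc F s L ∨ Rej F s L := by
  induction SS using Finset.induction_on generalizing M with
  | empty => exact ⟨M, subset_rfl, hM, by simp⟩
  | insert _ _ hnotmem ih =>
    rename_i s SS'
    obtain ⟨L, hLM, hLi, hL⟩ := ih M hM
    obtain ⟨L', hL'L, hL'i, hdec⟩ := decideAR F s L hLi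
    refine ⟨L', hL'L.trans hLM, hL'i, fun u hu => ?_⟩
    rcases Finset.mem_insert.1 hu with rfl | hu
    · exact hdec
    · rcases hL u hu with h | h
      · exact Or.inl (acc_mono F hL'L h)
      · exact Or.inr (rej_mono F hL'L h)

lemma key {s : Finset ℕ} {M : Set ℕ} (hrej : Rej F s M) :
    {n | n ∈ M ∧ Acc F (insert n s) {m | m ∈ M ∧ n < m}}.Finite := by
  classical
  by_contra hB
  set B := {n | n ∈ M ∧ Acc F (insert n s) {m | m ∈ M ∧ n < m}} with hBdef
  have hBM : B ⊆ M := fun n hn => hn.1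
  have hBi : B.Infinite := fun h => hB h
  refine hrej B hBM hBi ?_
  intro L hLB hLi
  have hne : ∃ m, m ∈ L := hLi.nonempty
  let n := Nat.find hne
  have hnL : n ∈ L := Nat.find_spec hne
  have hmin : ∀ m ∈ L, n ≤ m := fun m hm => Nat.find_min' hne hm
  have hnB : n ∈ B := hLB hnL
  have haccn : Acc F (insert n s) {m | m ∈ M ∧ n < m} := hnB.2
  have hL'sub : (L ∩ {m | n < m}) ⊆ {m | m ∈ M ∧ n < m} :=
    fun m hm => ⟨hBM (hLB hm.1), hm.2⟩
  have hL'i : (L ∩ {m | n < m}).Infinite := by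
    have : L \ Set.Iic n ⊆ L ∩ {m | n < m} := by
      intro m hm; exact ⟨hm.1, by simpa [Set.mem_Iic] using hm.2⟩
    exact ((hLi.diff (Set.finite_Iic n)).mono this)
  obtain ⟨t', ⟨ht'sub, ht'pref⟩, hFt'⟩ :=
    (acc_mono F hL'sub haccn) (L ∩ {m | n < m}) subset_rfl hL'i
  refine ⟨insert n t', ⟨?_, ?_⟩, ?_⟩
  · intro a ha
    rcases Finset.mem_insert.1 (by exact_mod_cast ha) with rfl | ha'
    · exact hnL
    · exact (ht'sub ha').1
  · intro a ha b hb hbt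
    rcases Finset.mem_insert.1 ha with rfl | ha'
    · rcases lt_or_eq_of_le (hmin b hb) with h | h
      · exact h
      · exact absurd (Finset.mem_insert_self _ _) (h ▸ hbt)
    · have hbn : b ≠ n := by rintro rfl; exact hbt (Finset.mem_insert_self _ _)
      have hbL' : b ∈ L ∩ {m | n < m} :=
        ⟨hb, lt_of_le_of_ne (hmin b hb) (Ne.symm hbn)⟩
      exact ht'pref a ha' b hbL' (fun h => hbt (Finset.mem_insert_of_mem h))
  · have : s ∪ insert n t' = insert n s ∪ t' := by
      ext x; simp only [Finset.mem_union, Finset.mem_insert]; tauto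
    rw [this]; exact hFt'


theorem galvinPrikry (F : Finset ℕ → Prop) (M₀ : Set ℕ) (hM₀ : M₀.Infinite) :
    ∃ M ⊆ M₀, M.Infinite ∧
      ((∀ L ⊆ M, L.Infinite → ∃ t : Finset ℕ,
          (↑t ⊆ L ∧ ∀ a ∈ t, ∀ b ∈ L, b ∉ t → a < b) ∧ F t)
       ∨ (∀ t : Finset ℕ, ↑t ⊆ M → ¬ F t)) := by
  by_cases hex : ∃ L ⊆ M₀, L.Infinite ∧ Acc F ∅ L
  · obtain ⟨L, hLM, hLi, hacc⟩ := hex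
    refine ⟨L, hLM, hLi, Or.inl ?_⟩
    intro L' hL' hL'i
    obtain ⟨t, hpref, hFt⟩ := hacc L' hL' hL'i
    exact ⟨t, hpref, by simpa using hFt⟩
  have hrej0 : Rej F ∅ M₀ := fun L hL hLi hacc => hex ⟨L, hL, hLi, hacc⟩
  -- Phase 1 : build a fusion sequence deciding all finite subsets
  have phase1 : ∃ f : ℕ → Finset ℕ × Set ℕ, f 0 = (∅, M₀) ∧
      (∀ n, (f n).2.Infinite ∧ (f n).2 ⊆ M₀ ∧
        (∀ x ∈ (f n).1, ∀ m ∈ (f n).2, x < m) ∧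
        (∀ s ∈ (f n).1.powerset, Acc F s (f n).2 ∨ Rej F s (f n).2)) ∧
      (∀ n, ∃ p ∈ (f n).2, (f (n+1)).1 = insert p (f n).1 ∧
        (f (n+1)).2 ⊆ {m | m ∈ (f n).2 ∧ p < m}) := by
    apply exists_iter (Inv := fun x : Finset ℕ × Set ℕ => x.2.Infinite ∧ x.2 ⊆ M₀ ∧
        (∀ y ∈ x.1, ∀ m ∈ x.2, y < m) ∧
        (∀ s ∈ x.1.powerset, Acc F s x.2 ∨ Rej F s x.2))
      (Rel := fun x y : Finset ℕ × Set ℕ => ∃ p ∈ x.2, y.1 = insert p x.1 ∧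
        y.2 ⊆ {m | m ∈ x.2 ∧ p < m})
    · refine ⟨hM₀, subset_rfl, by simp, ?_⟩
      intro s hs
      simp only [Finset.powerset_empty, Finset.mem_singleton] at hs
      subst hs
      exact Or.inr hrej0
    · rintro ⟨c, N⟩ ⟨hNi, hNM, hord, hdec⟩
      obtain ⟨p, hpN⟩ := hNi.nonempty
      have hN'i : ({m | m ∈ N ∧ p < m}).Infinite := by
        have : N \ Set.Iic p ⊆ {m | m ∈ N ∧ p < m} := by
          intro m hm; exact ⟨hm.1, by simpa [Set.mem_Iic] using hm.2⟩
        exact (hNi.diff (Set.finite_Iic p)).mono this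
      obtain ⟨L, hLN, hLi, hLdec⟩ :=
        decideAR_many F (insert p c).powerset {m | m ∈ N ∧ p < m} hN'i
      refine ⟨(insert p c, L), ⟨hLi, fun x hx => hNM (hLN hx).1, ?_, hLdec⟩,
        ⟨p, hpN, rfl, hLN⟩⟩
      intro x hx m hm
      rcases Finset.mem_insert.1 hx with rfl | hx'
      · exact (hLN hm).2
      · exact hord x hx' m (hLN hm).1
  obtain ⟨st, hst0, hstInv, hstRel⟩ := phase1
  choose ν hνmem hνins hνsub using hstRel
  set D : ℕ → Set ℕ := fun k => (st k).2 with hD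
  have hDi : ∀ k, (D k).Infinite := fun k => (hstInv k).1
  have hDchain : ∀ k, D (k+1) ⊆ D k := fun k m hm => (hνsub k hm).1
  have hDle : ∀ {j k}, k ≤ j → D j ⊆ D k := by
    intro j k h
    induction j with
    | zero => simp_all
    | succ j ih =>
      rcases Nat.lt_or_ge k (j+1) with h' | h'
      · exact (hDchain j).trans (ih (Nat.lt_succ_iff.1 h'))
      · have : k = j + 1 := le_antisymm h h'
        subst this; exact subset_rfl
  have hνD : ∀ {j k}, k ≤ j → ν j ∈ D k := fun hjk => hDle hjk (hνmem _)
  have hνmono : StrictMono ν := by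
    apply strictMono_nat_of_lt_succ
    intro k
    exact (hνsub k (hνD (le_refl (k+1)))).2
  have hc : ∀ k, (st k).1 = Finset.image ν (Finset.range k) := by
    intro k
    induction k with
    | zero => rw [hst0]; simp
    | succ k ih => rw [hνins k, ih, Finset.range_add_one, Finset.image_insert]
  have hνM₀ : ∀ k, ν k ∈ M₀ := fun k => (hstInv k).2.1 (hνmem k)
  -- decisions transfer to any suitable subset of `range ν`
  have decidedOn : ∀ (s : Finset ℕ) (V : Set ℕ), ↑s ⊆ Set.range ν → V ⊆ Set.range ν →
      (∀ x ∈ s, ∀ v ∈ V, x < v) → V.Infinite → Acc F s V ∨ Rej F s V := by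
    intro s V hsν hVν hord hVi
    rcases s.eq_empty_or_nonempty with rfl | hsne
    · have hVD : V ⊆ D 0 := by
        intro v hv
        obtain ⟨j, rfl⟩ := hVν hv
        exact hνD (Nat.zero_le j)
      rcases (hstInv 0).2.2.2 ∅ (by simp) with h | h
      · exact Or.inl (acc_mono F hVD h)
      · exact Or.inr (rej_mono F hVD h)
    · obtain ⟨m, hm⟩ := hsν (Finset.mem_coe.2 (s.max'_mem hsne))
      set k := m + 1 with hk
      have hsc : s ⊆ (st k).1 := by
        rw [hc k]
        intro x hx
        obtain ⟨j, hj⟩ := hsν (Finset.mem_coe.2 hx)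
        have : ν j ≤ ν m := by rw [hj, hm]; exact s.le_max' x hx
        have hjm : j ≤ m := (hνmono.le_iff_le).1 this
        exact Finset.mem_image.2 ⟨j, Finset.mem_range.2 (Nat.lt_succ_of_le hjm), hj⟩
      have hVD : V ⊆ D k := by
        intro v hv
        obtain ⟨j, rfl⟩ := hVν hv
        have : ν m < ν j := by
          rw [hm]; exact hord _ (s.max'_mem hsne) _ hv
        exact hνD (hνmono.lt_iff_lt.1 this)
      rcases (hstInv k).2.2.2 s (Finset.mem_powerset.2 hsc) with h | h
      · exact Or.inl (acc_mono F hVD h)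
      · exact Or.inr (rej_mono F hVD h)
  -- Phase 2 : build a set all of whose finite subsets are rejected
  have phase2 : ∃ f : ℕ → Finset ℕ × Set ℕ, f 0 = (∅, Set.range ν) ∧
      (∀ n, (f n).2.Infinite ∧ (f n).2 ⊆ Set.range ν ∧ ↑(f n).1 ⊆ Set.range ν ∧
        (∀ x ∈ (f n).1, ∀ m ∈ (f n).2, x < m) ∧
        (∀ s ∈ (f n).1.powerset, Rej F s (f n).2)) ∧
      (∀ n, ∃ p ∈ (f n).2, (f (n+1)).1 = insert p (f n).1 ∧
        (f (n+1)).2 ⊆ {m | m ∈ (f n).2 ∧ p < m}) := by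
    apply exists_iter (Inv := fun x : Finset ℕ × Set ℕ => x.2.Infinite ∧ x.2 ⊆ Set.range ν ∧
        ↑x.1 ⊆ Set.range ν ∧ (∀ y ∈ x.1, ∀ m ∈ x.2, y < m) ∧
        (∀ s ∈ x.1.powerset, Rej F s x.2))
      (Rel := fun x y : Finset ℕ × Set ℕ => ∃ p ∈ x.2, y.1 = insert p x.1 ∧
        y.2 ⊆ {m | m ∈ x.2 ∧ p < m})
    · have hri : (Set.range ν).Infinite := Set.infinite_range_of_injective hνmono.injective
      refine ⟨hri, subset_rfl, by simp, by simp, ?_⟩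
      intro s hs
      simp only [Finset.powerset_empty, Finset.mem_singleton] at hs
      subst hs
      refine rej_mono F ?_ hrej0
      rintro x ⟨j, rfl⟩
      exact hνM₀ j
    · rintro ⟨d, R⟩ ⟨hRi, hRν, hdν, hord, hrej⟩
      have hBfin : ∀ s ∈ d.powerset,
          {n | n ∈ R ∧ Acc F (insert n s) {m | m ∈ R ∧ n < m}}.Finite :=
        fun s hs => key F (hrej s hs)
      have hUfin : (⋃ s ∈ d.powerset,
          {n | n ∈ R ∧ Acc F (insert n s) {m | m ∈ R ∧ n < m}}).Finite :=
        Set.Finite.biUnion (d.powerset : Finset (Finset ℕ)).finite_toSet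
          (fun s hs => hBfin s hs)
      have hexp : (R \ (⋃ s ∈ d.powerset,
          {n | n ∈ R ∧ Acc F (insert n s) {m | m ∈ R ∧ n < m}})).Infinite :=
        hRi.diff hUfin
      obtain ⟨p, hpR, hpU⟩ := hexp.nonempty
      have hR'i : ({m | m ∈ R ∧ p < m}).Infinite := by
        have : R \ Set.Iic p ⊆ {m | m ∈ R ∧ p < m} := by
          intro m hm; exact ⟨hm.1, by simpa [Set.mem_Iic] using hm.2⟩
        exact (hRi.diff (Set.finite_Iic p)).mono this
      refine ⟨(insert p d, {m | m ∈ R ∧ p < m}),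
        ⟨hR'i, fun m hm => hRν hm.1, ?_, ?_, ?_⟩, ⟨p, hpR, rfl, subset_rfl⟩⟩
      · intro x hx
        rcases Finset.mem_insert.1 (by exact_mod_cast hx) with rfl | hx'
        · exact hRν hpR
        · exact hdν hx'
      · intro x hx m hm
        rcases Finset.mem_insert.1 hx with rfl | hx'
        · exact hm.2
        · exact hord x hx' m hm.1
      · intro s hs
        by_cases hps : p ∈ s
        · have hsd : s.erase p ⊆ d := by
            intro x hx
            have := Finset.mem_powerset.1 hs (Finset.mem_of_mem_erase hx)
            rcases Finset.mem_insert.1 this with rfl | h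
            · exact absurd rfl (Finset.ne_of_mem_erase hx)
            · exact h
          have hpnotB : ¬ Acc F (insert p (s.erase p)) {m | m ∈ R ∧ p < m} := by
            intro hacc
            exact hpU (Set.mem_biUnion (Finset.mem_coe.2
              (Finset.mem_powerset.2 hsd)) ⟨hpR, hacc⟩)
          have hseq : insert p (s.erase p) = s := Finset.insert_erase hps
          rw [hseq] at hpnotB
          have hsν : ↑s ⊆ Set.range ν := by
            intro x hx
            have := Finset.mem_powerset.1 hs (Finset.mem_coe.1 hx)
            rcases Finset.mem_insert.1 this with rfl | h
            · exact hRν hpR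
            · exact hdν h
          have hordV : ∀ x ∈ s, ∀ v ∈ ({m | m ∈ R ∧ p < m} : Set ℕ), x < v := by
            intro x hx v hv
            have := Finset.mem_powerset.1 hs hx
            rcases Finset.mem_insert.1 this with rfl | h
            · exact hv.2
            · exact hord x h v hv.1
          rcases decidedOn s {m | m ∈ R ∧ p < m} hsν (fun m hm => hRν hm.1)
              hordV hR'i with h | h
          · exact absurd h hpnotB
          · exact h
        · have hsd : s ⊆ d := by
            intro x hx
            rcases Finset.mem_insert.1 (Finset.mem_powerset.1 hs hx) with rfl | h
            · exact absurd hx hps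
            · exact h
          exact rej_mono F (fun m hm => hm.1) (hrej s (Finset.mem_powerset.2 hsd))
  obtain ⟨st2, hst20, hst2Inv, hst2Rel⟩ := phase2
  choose μ hμmem hμins hμsub using hst2Rel
  have hμmono : StrictMono μ := by
    apply strictMono_nat_of_lt_succ
    intro k
    have : μ (k+1) ∈ (st2 (k+1)).2 := hμmem (k+1)
    exact (hμsub k this).2
  have hd : ∀ k, (st2 k).1 = Finset.image μ (Finset.range k) := by
    intro k
    induction k with
    | zero => rw [hst20]; simp
    | succ k ih => rw [hμins k, ih, Finset.range_add_one, Finset.image_insert]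
  have hμν : ∀ k, μ k ∈ Set.range ν := fun k => (hst2Inv k).2.1 (hμmem k)
  refine ⟨Set.range μ, ?_, Set.infinite_range_of_injective hμmono.injective, Or.inr ?_⟩
  · intro x hx
    obtain ⟨k, rfl⟩ := hx
    obtain ⟨j, hj⟩ := hμν k
    rw [← hj]; exact hνM₀ j
  · intro t ht hFt
    -- t is contained in some (st2 k).1
    rcases t.eq_empty_or_nonempty with rfl | htne
    · -- F ∅ : then Acc F ∅ everything, contradicting hrej0
      have : Acc F ∅ M₀ := by
        intro L hL hLi
        exact ⟨∅, ⟨by simp, by simp⟩, by simpa using hFt⟩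
      exact hrej0 M₀ subset_rfl hM₀ this
    · obtain ⟨m, hm⟩ := ht (Finset.mem_coe.2 (t.max'_mem htne))
      set k := m + 1 with hk
      have htd : t ⊆ (st2 k).1 := by
        rw [hd k]
        intro x hx
        obtain ⟨j, hj⟩ := ht (Finset.mem_coe.2 hx)
        have : μ j ≤ μ m := by rw [hj, hm]; exact t.le_max' x hx
        have hjm : j ≤ m := (hμmono.le_iff_le).1 this
        exact Finset.mem_image.2 ⟨j, Finset.mem_range.2 (Nat.lt_succ_of_le hjm), hj⟩
      have hrejt : Rej F t (st2 k).2 := (hst2Inv k).2.2.2.2 t (Finset.mem_powerset.2 htd)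
      refine hrejt (st2 k).2 subset_rfl (hst2Inv k).1 ?_
      intro L hL hLi
      exact ⟨∅, ⟨by simp, by simp⟩, by simpa using hFt⟩


section Dich
variable {Z : Type*}

variable {Z : Type*}

def listAlt (A B : ℕ → Set Z) : Bool → List ℕ → Set Z
  | _, [] => Set.univ
  | c, n :: r => (bif c then B n else A n) ∩ listAlt A B (!c) r

variable (A B : ℕ → Set Z)

lemma listAlt_nil (c : Bool) : listAlt A B c [] = Set.univ := rfl
lemma listAlt_cons (c : Bool) (n : ℕ) (r : List ℕ) :
    listAlt A B c (n :: r) = (bif c then B n else A n) ∩ listAlt A B (!c) r := rfl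

/-- the padding list: for each pattern index `k`, place `e (3k+1)` at a position
whose parity is prescribed by `k ∈ Q`, using `e (3k)` as padding when needed. -/
def buildL (e : ℕ → ℕ) (Q : Finset ℕ) : List ℕ → Bool → List ℕ
  | [], _ => []
  | k :: r, c =>
      if decide (k ∈ Q) = c then e (3*k+1) :: buildL e Q r (!c)
      else e (3*k) :: e (3*k+1) :: buildL e Q r c

lemma mem_buildL (e : ℕ → ℕ) (Q : Finset ℕ) :
    ∀ (l : List ℕ) (c : Bool) (x : ℕ), x ∈ buildL e Q l c →
      ∃ k ∈ l, x = e (3*k) ∨ x = e (3*k+1) := by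
  intro l
  induction l with
  | nil => intro c x hx; simp [buildL] at hx
  | cons k r ih =>
    intro c x hx
    rw [buildL] at hx
    split at hx
    · rcases List.mem_cons.1 hx with rfl | hx'
      · exact ⟨k, List.mem_cons_self, Or.inr rfl⟩
      · obtain ⟨k', hk', h⟩ := ih (!c) x hx'
        exact ⟨k', List.mem_cons_of_mem _ hk', h⟩
    · rcases List.mem_cons.1 hx with rfl | hx'
      · exact ⟨k, List.mem_cons_self, Or.inl rfl⟩
      · rcases List.mem_cons.1 hx' with rfl | hx''
        · exact ⟨k, List.mem_cons_self, Or.inr rfl⟩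
        · obtain ⟨k', hk', h⟩ := ih c x hx''
          exact ⟨k', List.mem_cons_of_mem _ hk', h⟩

lemma pairwise_buildL {e : ℕ → ℕ} (he : StrictMono e) (Q : Finset ℕ) :
    ∀ (l : List ℕ) (c : Bool), List.Pairwise (· < ·) l →
      List.Pairwise (· < ·) (buildL e Q l c) := by
  intro l
  induction l with
  | nil => intro c _; simp [buildL]
  | cons k r ih =>
    intro c hl
    have hr := ih (!c) (List.pairwise_cons.1 hl).2
    have hr' := ih c (List.pairwise_cons.1 hl).2
    have hgt : ∀ x ∈ buildL e Q r (!c), e (3*k+1) < x := by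
      intro x hx
      obtain ⟨k', hk', h⟩ := mem_buildL e Q r (!c) x hx
      have hkk' : k < k' := (List.pairwise_cons.1 hl).1 k' hk'
      rcases h with rfl | rfl
      · exact he (by omega)
      · exact he (by omega)
    have hgt' : ∀ x ∈ buildL e Q r c, e (3*k+1) < x := by
      intro x hx
      obtain ⟨k', hk', h⟩ := mem_buildL e Q r c x hx
      have hkk' : k < k' := (List.pairwise_cons.1 hl).1 k' hk'
      rcases h with rfl | rfl
      · exact he (by omega)
      · exact he (by omega)
    rw [buildL]
    split
    · exact List.pairwise_cons.2 ⟨hgt, hr⟩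
    · refine List.pairwise_cons.2 ⟨?_, List.pairwise_cons.2 ⟨hgt', hr'⟩⟩
      intro x hx
      rcases List.mem_cons.1 hx with rfl | hx'
      · exact he (by omega)
      · exact lt_trans (he (by omega)) (hgt' x hx')

lemma buildL_sem {e : ℕ → ℕ} (Q : Finset ℕ) (z : Z) :
    ∀ (l : List ℕ) (c : Bool), z ∈ listAlt A B c (buildL e Q l c) →
      ∀ k ∈ l, (k ∈ Q → z ∈ B (e (3*k+1))) ∧ (k ∉ Q → z ∈ A (e (3*k+1))) := by
  intro l
  induction l with
  | nil => intro c _ k hk; simp at hk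
  | cons k r ih =>
    intro c hz k' hk'
    rw [buildL] at hz
    split at hz
    · rename_i hcond
      rw [listAlt_cons] at hz
      rcases List.mem_cons.1 hk' with rfl | hk''
      · constructor
        · intro hkQ
          have : decide (k' ∈ Q) = true := decide_eq_true hkQ
          rw [this] at hcond
          rw [← hcond] at hz
          simpa using hz.1
        · intro hkQ
          have : decide (k' ∈ Q) = false := decide_eq_false hkQ
          rw [this] at hcond
          rw [← hcond] at hz
          simpa using hz.1
      · exact ih (!c) hz.2 k' hk''
    · rename_i hcond
      rw [listAlt_cons, listAlt_cons] at hz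
      have hz2 := hz.2
      rcases List.mem_cons.1 hk' with rfl | hk''
      · constructor
        · intro hkQ
          have hd : decide (k' ∈ Q) = true := decide_eq_true hkQ
          rw [hd] at hcond
          have : c = false := by revert hcond; cases c <;> simp
          subst this
          simpa using hz2.1
        · intro hkQ
          have hd : decide (k' ∈ Q) = false := decide_eq_false hkQ
          rw [hd] at hcond
          have : c = true := by revert hcond; cases c <;> simp
          subst this
          simpa using hz2.1
      · have : z ∈ listAlt A B c (buildL e Q r c) := by
          have hbb : (!(!c)) = c := Bool.not_not c
          rw [hbb] at hz2
          exact hz2.2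
        exact ih c this k' hk''

lemma pattern_mem_buildL (e : ℕ → ℕ) (Q : Finset ℕ) :
    ∀ (l : List ℕ) (c : Bool) (k : ℕ), k ∈ l → e (3*k+1) ∈ buildL e Q l c := by
  intro l
  induction l with
  | nil => intro c k hk; simp at hk
  | cons k0 r ih =>
    intro c k hk
    rw [buildL]
    rcases List.mem_cons.1 hk with rfl | hk'
    · split
      · exact List.mem_cons_self
      · exact List.mem_cons_of_mem _ (List.mem_cons_self)
    · split
      · exact List.mem_cons_of_mem _ (ih (!c) k hk')
      · exact List.mem_cons_of_mem _ (List.mem_cons_of_mem _ (ih c k hk'))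



lemma downward_closed_eq_range (J : Finset ℕ) (h : ∀ j ∈ J, ∀ i < j, i ∈ J) :
    J = Finset.range J.card := by
  have h1 : Finset.range J.card ⊆ J := by
    intro j hj
    rw [Finset.mem_range] at hj
    by_contra hjJ
    have hJr : J ⊆ Finset.range j := by
      intro i hi
      rw [Finset.mem_range]
      rcases lt_trichotomy i j with h' | rfl | h'
      · exact h'
      · exact absurd hi hjJ
      · exact absurd (h i hi j h') hjJ
    have := Finset.card_le_card hJr
    simp only [Finset.card_range] at this
    omega
  have h2 : J ⊆ Finset.range J.card := by
    intro j hj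
    rw [Finset.mem_range]
    by_contra hjc
    push_neg at hjc
    have hr : Finset.range (j+1) ⊆ J := by
      intro i hi
      rw [Finset.mem_range] at hi
      rcases Nat.lt_succ_iff_lt_or_eq.1 hi with h' | rfl
      · exact h j hj i h'
      · exact hj
    have := Finset.card_le_card hr
    simp only [Finset.card_range] at this
    omega
  exact le_antisymm h2 h1

lemma sort_map_range {w : ℕ → ℕ} (hw : StrictMono w) (m : ℕ) :
    (Finset.sort (((List.range m).map w).toFinset) (· ≤ ·)) = (List.range m).map w := by
  have hpw : List.Pairwise (· < ·) ((List.range m).map w) := by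
    refine List.Pairwise.map w (fun a b h => hw h) ?_
    exact List.pairwise_lt_range (n := m)
  have hnd : ((List.range m).map w).Nodup := hpw.nodup
  exact (List.toFinset_sort _ hnd).2 (hpw.imp le_of_lt)



lemma alt_sem (A B : ℕ → Set Z) (w : ℕ → ℕ) (z : Z)
    (hw : ∀ i, (Odd i → z ∈ B (w i)) ∧ (¬ Odd i → z ∈ A (w i))) :
    ∀ (m s : ℕ) (c : Bool), c = decide (Odd s) →
      z ∈ listAlt A B c ((List.range' s m).map w) := by
  intro m
  induction m with
  | zero => intro s c _; simp [listAlt]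
  | succ m ih =>
    intro s c hc
    rw [List.range'_succ, List.map_cons, listAlt_cons]
    constructor
    · by_cases h : Odd s
      · have : c = true := by rw [hc]; simpa using h
        subst this
        simpa using (hw s).1 h
      · have : c = false := by rw [hc]; simpa using h
        subst this
        simpa using (hw s).2 h
    · refine ih (s+1) (!c) ?_
      rw [hc]
      rw [← decide_not]
      congr 1
      simp [Nat.odd_add_one]

/-- The Rosenthal-type dichotomy for a sequence of pairs of sets, relative to `M₀`. -/
lemma dichotomy (A B : ℕ → Set Z) (M₀ : Set ℕ) (hM₀ : M₀.Infinite) :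
    (∃ e : ℕ → ℕ, (∀ k, e k ∈ M₀) ∧ ∀ P Q : Finset ℕ, Disjoint P Q →
        ((⋂ k ∈ P, A (e k)) ∩ ⋂ k ∈ Q, B (e k)).Nonempty) ∨
    (∃ M, M ⊆ M₀ ∧ M.Infinite ∧ ∀ z : Z,
        {n | n ∈ M ∧ z ∈ A n}.Finite ∨ {n | n ∈ M ∧ z ∈ B n}.Finite) := by
  classical
  set F : Finset ℕ → Prop := fun t => listAlt A B false (t.sort (· ≤ ·)) = ∅ with hF
  obtain ⟨M, hMM₀, hMi, hside⟩ := galvinPrikry F M₀ hM₀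
  have hMi' : {n | n ∈ M}.Infinite := hMi
  rcases hside with hacc | hrej
  · -- every infinite subset has an empty alternating prefix : oscillation-free
    right
    refine ⟨M, hMM₀, hMi, ?_⟩
    intro z
    by_contra hboth
    push_neg at hboth
    obtain ⟨hPi', hQi'⟩ := hboth
    have hPi : ({n | n ∈ M ∧ z ∈ A n} : Set ℕ).Infinite := hPi'
    have hQi : ({n | n ∈ M ∧ z ∈ B n} : Set ℕ).Infinite := hQi'
    set P' := {n | n ∈ M ∧ z ∈ A n} with hP'
    set Q' := {n | n ∈ M ∧ z ∈ B n} with hQ'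
    obtain ⟨v0, hv0⟩ := hPi.nonempty
    have hstep : ∀ x : Bool × ℕ, (x.2 ∈ (bif x.1 then Q' else P')) →
        ∃ y : Bool × ℕ, (y.2 ∈ (bif y.1 then Q' else P')) ∧ (y.1 = !x.1 ∧ x.2 < y.2) := by
      rintro ⟨c, v⟩ _
      have hSi : (bif !c then Q' else P').Infinite := by
        cases c
        · simpa using hQi
        · simpa using hPi
      obtain ⟨v', hv', hvv'⟩ := hSi.exists_gt v
      exact ⟨(!c, v'), by simpa using hv', rfl, hvv'⟩
    obtain ⟨ff, hf0, hfInv, hfRel⟩ := exists_iter (T := Bool × ℕ)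
      (Inv := fun x => x.2 ∈ (bif x.1 then Q' else P'))
      (Rel := fun x y => y.1 = !x.1 ∧ x.2 < y.2)
      (false, v0) (by simpa using hv0) hstep
    set w : ℕ → ℕ := fun i => (ff i).2 with hwdef
    have hpar : ∀ i, (ff i).1 = decide (Odd i) := by
      intro i
      induction i with
      | zero => rw [hf0]; simp
      | succ i ih =>
        rw [(hfRel i).1, ih, ← decide_not]
        congr 1
        simp [Nat.odd_add_one]
    have hwmono : StrictMono w := strictMono_nat_of_lt_succ (fun i => (hfRel i).2)
    have hwz : ∀ i, (Odd i → z ∈ B (w i)) ∧ (¬ Odd i → z ∈ A (w i)) := by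
      intro i
      have hInv := hfInv i
      rw [hpar i] at hInv
      constructor
      · intro h
        have : decide (Odd i) = true := decide_eq_true h
        rw [this] at hInv
        exact (by simpa using hInv : w i ∈ Q').2
      · intro h
        have : decide (Odd i) = false := decide_eq_false h
        rw [this] at hInv
        exact (by simpa using hInv : w i ∈ P').2
    have hwM : ∀ i, w i ∈ M := by
      intro i
      have hInv := hfInv i
      cases hc : (ff i).1 <;> rw [hc] at hInv
      · exact (by simpa using hInv : w i ∈ P').1
      · exact (by simpa using hInv : w i ∈ Q').1
    have hLsub : Set.range w ⊆ M := by rintro x ⟨i, rfl⟩; exact hwM i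
    have hLi : (Set.range w).Infinite := Set.infinite_range_of_injective hwmono.injective
    obtain ⟨t, ⟨htsub, htpref⟩, hFt⟩ := hacc (Set.range w) hLsub hLi
    -- t is the image under w of a downward closed set
    set J : Finset ℕ := t.preimage w (hwmono.injective.injOn) with hJ
    have hmemJ : ∀ j, j ∈ J ↔ w j ∈ t := fun j => Finset.mem_preimage
    have htJ : t = J.image w := by
      ext x
      constructor
      · intro hx
        obtain ⟨j, rfl⟩ := htsub hx
        exact Finset.mem_image.2 ⟨j, (hmemJ j).2 hx, rfl⟩
      · intro hx
        obtain ⟨j, hj, rfl⟩ := Finset.mem_image.1 hx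
        exact (hmemJ j).1 hj
    have hJdc : ∀ j ∈ J, ∀ i < j, i ∈ J := by
      intro j hj i hij
      rw [hmemJ] at hj ⊢
      by_contra hit
      have := htpref (w j) hj (w i) ⟨i, rfl⟩ hit
      exact absurd (hwmono hij) (not_lt.2 this.le)
    have hJr : J = Finset.range J.card := downward_closed_eq_range J hJdc
    set m := J.card with hm
    have htlist : t = ((List.range m).map w).toFinset := by
      rw [htJ, hJr]
      ext x
      simp [List.mem_map, List.mem_range]
    have hsort : t.sort (· ≤ ·) = (List.range m).map w := by
      rw [htlist]; exact sort_map_range hwmono m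
    have hzmem : z ∈ listAlt A B false ((List.range' 0 m).map w) :=
      alt_sem A B w z hwz m 0 false (by simp)
    have hFt' : listAlt A B false (Finset.sort t (fun x1 x2 => x1 ≤ x2)) = ∅ := hFt
    rw [hsort, List.range_eq_range'] at hFt'
    rw [hFt'] at hzmem
    exact hzmem
  · -- all alternating intersections nonempty : independent subfamily
    left
    set η : ℕ → ℕ := Nat.nth (· ∈ M) with hη
    have hηmono : StrictMono η := Nat.nth_strictMono hMi'
    have hηmem : ∀ k, η k ∈ M := fun k => Nat.nth_mem_of_infinite hMi' k
    refine ⟨fun k => η (3*k+1), fun k => hMM₀ (hηmem _), ?_⟩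
    intro P Q hPQ
    set l := (P ∪ Q).sort (· ≤ ·) with hl
    have hlpw : List.Pairwise (· < ·) l := (Finset.sortedLT_sort _).pairwise
    set bl := buildL η Q l false with hbl
    have hbpw : List.Pairwise (· < ·) bl := pairwise_buildL hηmono Q l false hlpw
    set t : Finset ℕ := bl.toFinset with ht
    have htM : ↑t ⊆ M := by
      intro x hx
      have : x ∈ bl := by simpa [ht] using hx
      obtain ⟨k, _, h⟩ := mem_buildL η Q l false x this
      rcases h with rfl | rfl <;> exact hηmem _
    have hsort : t.sort (· ≤ ·) = bl :=
      (List.toFinset_sort _ hbpw.nodup).2 (hbpw.imp le_of_lt)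
    have hne : listAlt A B false bl ≠ ∅ := by
      have h2 : ¬ listAlt A B false (Finset.sort t (fun x1 x2 => x1 ≤ x2)) = ∅ := hrej t htM
      rw [hsort] at h2
      exact h2
    obtain ⟨z, hz⟩ := Set.nonempty_iff_ne_empty.2 hne
    have hsem := buildL_sem A B Q z l false hz
    refine ⟨z, ?_, ?_⟩
    · refine Set.mem_iInter₂.2 (fun k hk => ?_)
      have hkl : k ∈ l := (Finset.mem_sort _).2 (Finset.mem_union_left _ hk)
      have hkQ : k ∉ Q := Finset.disjoint_left.1 hPQ hk
      exact (hsem k hkl).2 hkQ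
    · refine Set.mem_iInter₂.2 (fun k hk => ?_)
      have hkl : k ∈ l := (Finset.mem_sort _).2 (Finset.mem_union_right _ hk)
      exact (hsem k hkl).1 hk

end Dich


lemma exists_conv {G Y : Type*} [Group G] [MulAction G Y] [MetricSpace Y] [CompactSpace Y]
    [ContinuousConstSMul G Y] [Nonempty Y]
    (hYtame : ∀ f : Y → ℝ, Continuous f →
      ¬ ∃ g : ℕ → G, IsIndependentSeq fun n (y : Y) => f (g n • y))
    (g : ℕ → G) :
    ∃ d : ℕ → ℕ, StrictMono d ∧ ∀ y : Y, ∃ w : Y,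
      Tendsto (fun m => g (d m) • y) atTop (𝓝 w) := by
  classical
  obtain ⟨u, hu⟩ := TopologicalSpace.exists_dense_seq Y
  obtain ⟨tsk, htsk⟩ : ∃ f : ℕ → ℕ × ℚ × ℚ, Function.Surjective f :=
    exists_surjective_nat (ℕ × ℚ × ℚ)
  set Good : ℕ → Set ℕ → Prop := fun k M =>
    (((tsk k).2.1 : ℝ) < ((tsk k).2.2 : ℝ)) →
    ∀ y : Y, {n | n ∈ M ∧ dist (g n • y) (u (tsk k).1) < ((tsk k).2.1 : ℝ)}.Finite ∨
             {n | n ∈ M ∧ ((tsk k).2.2 : ℝ) < dist (g n • y) (u (tsk k).1)}.Finite with hGood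
  have hstep : ∀ k (M : Set ℕ), M.Infinite → ∃ M', M' ⊆ M ∧ M'.Infinite ∧ Good k M' := by
    intro k M hM
    by_cases hab : ((tsk k).2.1 : ℝ) < ((tsk k).2.2 : ℝ)
    · rcases dichotomy (fun n => {y : Y | dist (g n • y) (u (tsk k).1) < ((tsk k).2.1 : ℝ)})
        (fun n => {y : Y | ((tsk k).2.2 : ℝ) < dist (g n • y) (u (tsk k).1)}) M hM
        with ⟨e, heM, hind⟩ | ⟨M', h1, h2, h3⟩
      · exfalso
        refine hYtame (fun y => dist y (u (tsk k).1))
          (Continuous.dist continuous_id continuous_const) ⟨fun n => g (e n), ?_⟩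
        exact ⟨(tsk k).2.1, (tsk k).2.2, hab, fun P Q hPQ => hind P Q hPQ⟩
      · exact ⟨M', h1, h2, fun _ => h3⟩
    · exact ⟨M, subset_rfl, hM, fun h => absurd h hab⟩
  obtain ⟨M0, _, hM0i, hM0g⟩ := hstep 0 Set.univ Set.infinite_univ
  obtain ⟨st, hst0, hstInv, hstRel⟩ := exists_iter (T := ℕ × Set ℕ)
    (Inv := fun x => x.2.Infinite ∧ Good x.1 x.2)
    (Rel := fun x y => y.1 = x.1 + 1 ∧ y.2 ⊆ x.2)
    (0, M0) ⟨hM0i, hM0g⟩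
    (by
      rintro ⟨k, M⟩ ⟨hMi, _⟩
      obtain ⟨M', h1, h2, h3⟩ := hstep (k+1) M hMi
      exact ⟨(k+1, M'), ⟨h2, h3⟩, rfl, h1⟩)
  have hidx : ∀ n, (st n).1 = n := by
    intro n
    induction n with
    | zero => rw [hst0]
    | succ n ih => rw [(hstRel n).1, ih]
  set R : ℕ → Set ℕ := fun n => (st n).2 with hR
  have hRi : ∀ n, (R n).Infinite := fun n => (hstInv n).1
  have hRg : ∀ n, Good n (R n) := by
    intro n
    have := (hstInv n).2
    rwa [hidx n] at this
  have hRchain : ∀ n, R (n+1) ⊆ R n := fun n => (hstRel n).2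
  have hRle : ∀ {j k : ℕ}, k ≤ j → R j ⊆ R k := by
    intro j k h
    induction j with
    | zero => simp_all
    | succ j ih =>
      rcases Nat.lt_or_ge k (j+1) with h' | h'
      · exact (hRchain j).trans (ih (Nat.lt_succ_iff.1 h'))
      · have : k = j + 1 := le_antisymm h h'
        subst this; exact subset_rfl
  -- diagonal sequence
  obtain ⟨dd, hdd0, hddInv, hddRel⟩ := exists_iter (T := ℕ × ℕ)
    (Inv := fun x => x.2 ∈ R x.1)
    (Rel := fun x y => y.1 = x.1 + 1 ∧ x.2 < y.2)
    (0, (hRi 0).nonempty.choose) (hRi 0).nonempty.choose_spec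
    (by
      rintro ⟨k, v⟩ _
      obtain ⟨v', hv', hvv'⟩ := (hRi (k+1)).exists_gt v
      exact ⟨(k+1, v'), hv', rfl, hvv'⟩)
  have hdidx : ∀ n, (dd n).1 = n := by
    intro n
    induction n with
    | zero => rw [hdd0]
    | succ n ih => rw [(hddRel n).1, ih]
  set d : ℕ → ℕ := fun n => (dd n).2 with hd
  have hdmono : StrictMono d := strictMono_nat_of_lt_succ (fun n => (hddRel n).2)
  have hdR : ∀ {j k : ℕ}, k ≤ j → d j ∈ R k := by
    intro j k h
    have : d j ∈ R j := by have := hddInv j; rwa [hdidx j] at this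
    exact hRle h this
  refine ⟨d, hdmono, ?_⟩
  intro y
  by_contra hnc
  push_neg at hnc
  set seq : ℕ → Y := fun m => g (d m) • y with hseq
  obtain ⟨w₁, -, φ₁, hφ₁, h₁⟩ := IsCompact.tendsto_subseq (x := seq) isCompact_univ
    (fun m => Set.mem_univ _)
  have hton : ¬ Tendsto seq atTop (𝓝 w₁) := hnc w₁
  rw [Metric.tendsto_atTop] at hton
  push_neg at hton
  obtain ⟨ε, hε, hfreq⟩ := hton
  have hfreq' : ∃ᶠ n in atTop, ε ≤ dist (seq n) w₁ :=
    frequently_atTop.2 (fun N => (hfreq N).imp (fun n ⟨h1, h2⟩ => ⟨h1, h2⟩))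
  obtain ⟨φ₂, hφ₂, hP⟩ := extraction_of_frequently_atTop hfreq'
  obtain ⟨w₂, -, φ₃, hφ₃, h₂⟩ := IsCompact.tendsto_subseq (x := seq ∘ φ₂) isCompact_univ
    (fun m => Set.mem_univ _)
  have hww : ε ≤ dist w₂ w₁ := by
    have ht : Tendsto (fun i => dist ((seq ∘ φ₂ ∘ φ₃) i) w₁) atTop (𝓝 (dist w₂ w₁)) :=
      Tendsto.dist h₂ tendsto_const_nhds
    exact ge_of_tendsto ht (Eventually.of_forall (fun i => hP (φ₃ i)))
  have hwne : w₁ ≠ w₂ := by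
    intro h
    rw [h] at hww
    simp at hww
    linarith
  -- a dense point separating w₁ and w₂
  have hsep : ∃ i, dist w₁ (u i) ≠ dist w₂ (u i) := by
    by_contra hall
    push_neg at hall
    refine hwne (dist_le_zero.1 ?_ ).symm
    by_contra hpos
    push_neg at hpos
    have h3 : 0 < dist w₂ w₁ / 3 := by
      have := dist_nonneg (x := w₂) (y := w₁)
      rcases lt_or_eq_of_le this with h | h
      · linarith
      · exfalso; exact hwne (dist_eq_zero.1 h.symm).symm
    obtain ⟨i, hi⟩ := Metric.denseRange_iff.1 hu w₁ _ h3
    have h4 : dist w₂ w₁ ≤ dist w₂ (u i) + dist (u i) w₁ := dist_triangle _ _ _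
    rw [← hall i] at h4
    rw [dist_comm (u i) w₁] at h4
    linarith
  obtain ⟨i, hi⟩ := hsep
  -- in both cases we find a rational pair and two infinite index sets
  have main : ∀ (wA wB : Y) (σA σB : ℕ → ℕ), StrictMono σA → StrictMono σB →
      Tendsto (seq ∘ σA) atTop (𝓝 wA) → Tendsto (seq ∘ σB) atTop (𝓝 wB) →
      dist wA (u i) < dist wB (u i) → False := by
    intro wA wB σA σB hσA hσB hA hB hlt
    obtain ⟨aq, haq1, haq2⟩ := exists_rat_btwn hlt
    obtain ⟨bq, hbq1, hbq2⟩ := exists_rat_btwn haq2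
    obtain ⟨k, hk⟩ := htsk (i, aq, bq)
    have hG : Good k (R k) := hRg k
    rw [hGood] at hG
    rw [hk] at hG
    dsimp only at hG
    have hG' := hG (by exact_mod_cast hbq1)
    have htA : Tendsto (fun t => dist ((seq ∘ σA) t) (u i)) atTop (𝓝 (dist wA (u i))) :=
      Tendsto.dist hA tendsto_const_nhds
    have htB : Tendsto (fun t => dist ((seq ∘ σB) t) (u i)) atTop (𝓝 (dist wB (u i))) :=
      Tendsto.dist hB tendsto_const_nhds
    obtain ⟨NA, hNA⟩ := (Filter.eventually_atTop).1 (htA.eventually_lt_const haq1)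
    obtain ⟨NB, hNB⟩ := (Filter.eventually_atTop).1 (htB.eventually_const_lt hbq2)
    rcases hG' y with hfin | hfin
    · rw [← Set.not_infinite] at hfin
      refine hfin (Set.infinite_of_injective_forall_mem
        (f := fun t : ℕ => d (σA (NA + k + t))) ?_ ?_)
      · intro s t hst
        simp only at hst
        have := hσA.injective (hdmono.injective hst)
        omega
      · intro t
        refine ⟨hdR ?_, ?_⟩
        · calc k ≤ NA + k + t := by omega
            _ ≤ σA (NA + k + t) := hσA.le_apply
        · show dist (g (d (σA (NA + k + t))) • y) (u i) < (aq : ℝ)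
          exact hNA (NA + k + t) (by omega)
    · rw [← Set.not_infinite] at hfin
      refine hfin (Set.infinite_of_injective_forall_mem
        (f := fun t : ℕ => d (σB (NB + k + t))) ?_ ?_)
      · intro s t hst
        simp only at hst
        have := hσB.injective (hdmono.injective hst)
        omega
      · intro t
        refine ⟨hdR ?_, ?_⟩
        · calc k ≤ NB + k + t := by omega
            _ ≤ σB (NB + k + t) := hσB.le_apply
        · show (bq : ℝ) < dist (g (d (σB (NB + k + t))) • y) (u i)
          exact hNB (NB + k + t) (by omega)
  rcases lt_or_gt_of_ne hi with h | h
  · exact main w₁ w₂ φ₁ (φ₂ ∘ φ₃) hφ₁ (hφ₂.comp hφ₃) h₁ h₂ h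
  · exact main w₂ w₁ (φ₂ ∘ φ₃) φ₁ (hφ₂.comp hφ₃) hφ₁ h₂ h₁ h


lemma uncount_fiber {α β : Type*} {S : Set α} (hS : ¬ S.Countable) (F : α → β) {C : Set β}
    (hm : ∀ x ∈ S, F x ∈ C) (hC : C.Countable) :
    ∃ c ∈ C, ¬ {x ∈ S | F x = c}.Countable := by
  by_contra h
  push_neg at h
  have hsub : S ⊆ ⋃ c ∈ C, {x ∈ S | F x = c} :=
    fun x hx => Set.mem_biUnion (hm x hx) ⟨hx, rfl⟩
  exact hS ((hC.biUnion (fun c hc => h c hc)).mono hsub)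

lemma countable_finite_pred (c : Bool) : {ε : ℕ → Bool | {k | ε k = c}.Finite}.Countable := by
  have hsub : {ε : ℕ → Bool | {k | ε k = c}.Finite} ⊆
      ⋃ N : ℕ, {ε : ℕ → Bool | ∀ k, N ≤ k → ε k ≠ c} := by
    intro ε hε
    obtain ⟨N, hN⟩ := hε.bddAbove
    refine Set.mem_iUnion.2 ⟨N + 1, fun k hk hc => ?_⟩
    have := hN hc
    omega
  refine Set.Countable.mono hsub (Set.countable_iUnion (fun N => Set.Finite.countable ?_))
  refine Set.Finite.of_finite_image (f := fun ε => fun i : Fin N => ε i) (Set.toFinite _) ?_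
  intro ε hε ε' hε' heq
  funext k
  rcases Nat.lt_or_ge k N with hk | hk
  · exact congrFun heq ⟨k, hk⟩
  · have h1 := hε k hk
    have h2 := hε' k hk
    cases hc : ε k <;> cases hc' : ε' k <;> simp_all <;> cases c <;> simp_all
  
lemma not_countable_univ_fun : ¬ (Set.univ : Set (ℕ → Bool)).Countable := by
  intro h
  have : Countable (ℕ → Bool) := Set.countable_univ_iff.1 h
  obtain ⟨F, hF⟩ := exists_surjective_nat (ℕ → Bool)
  obtain ⟨n, hn⟩ := hF (fun m => !(F m m))
  have h2 := congrFun hn n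
  exact absurd h2 (by cases hc : F n n <;> simp [hc])


end GP17

theorem stmt16 {G X Y : Type*} [Group G] [TopologicalSpace G] [IsTopologicalGroup G]
    [MetricSpace X] [CompactSpace X] [MetricSpace Y] [CompactSpace Y]
    [MulAction G X] [MulAction G Y] [ContinuousSMul G X] [ContinuousSMul G Y]
    (π : X → Y) (hπcont : Continuous π) (hπsurj : Function.Surjective π)
    (hπequiv : ∀ (g : G) (x : X), π (g • x) = g • π x)
    -- `π` is a strongly almost 1-1 extension: `X ∖ X₀` is countable
    (hstrong : ({x : X | π ⁻¹' {π x} = {x}}ᶜ).Countable)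
    -- the `G`-system `Y` is tame
    (hYtame : ∀ f : Y → ℝ, Continuous f →
      ¬ ∃ g : ℕ → G, IsIndependentSeq fun n (y : Y) => f (g n • y))
    -- every element of `E(Y)` has countable fibers
    (hfib : ∀ p ∈ closure (Set.range fun g : G => fun y : Y => g • y),
      ∀ y : Y, (p ⁻¹' {y}).Countable) :
    -- then the `G`-system `X` is tame
    ∀ f : X → ℝ, Continuous f →
      ¬ ∃ g : ℕ → G, IsIndependentSeq fun n (x : X) => f (g n • x) := by
  classical
  intro f hf hexg
  obtain ⟨g, a, b, hab, hind⟩ := hexg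
  have hXne : Nonempty X := by
    obtain ⟨x, -⟩ := hind ∅ ∅ (by simp)
    exact ⟨x⟩
  have hYne : Nonempty Y := ⟨π (Classical.choice hXne)⟩
  obtain ⟨d, hdmono, hconv⟩ := GP17.exists_conv hYtame g
  choose q hq using hconv
  have hqcl : q ∈ closure (Set.range fun gg : G => fun y : Y => gg • y) := by
    refine mem_closure_of_tendsto (f := fun m => fun y : Y => g (d m) • y) (b := atTop)
      ?_ (Eventually.of_forall (fun m => ⟨g (d m), rfl⟩))
    exact tendsto_pi_nhds.2 (fun y => hq y)
  -- Cantor scheme along the subsequence d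
  have hscheme : ∀ ε : ℕ → Bool, ∃ x : X, ∀ k,
      (ε k = false → f (g (d k) • x) ≤ a) ∧ (ε k = true → b ≤ f (g (d k) • x)) := by
    intro ε
    set S : ℕ → Set X := fun k =>
      if ε k then {x | b ≤ f (g (d k) • x)} else {x | f (g (d k) • x) ≤ a} with hS
    have hSclosed : ∀ k, IsClosed (S k) := by
      intro k
      have hcont : Continuous (fun x : X => f (g (d k) • x)) :=
        hf.comp (continuous_const_smul _)
      rw [hS]
      dsimp only
      split
      · exact isClosed_le continuous_const hcont
      · exact isClosed_le hcont continuous_const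
    set T : ℕ → Set X := fun m => ⋂ k ∈ Finset.range m, S k with hT
    have hTsub : ∀ m, T (m+1) ⊆ T m := by
      intro m x hx
      simp only [hT, Set.mem_iInter, Finset.mem_range] at hx ⊢
      intro k hk
      exact hx k (by omega)
    have hTne : ∀ m, (T m).Nonempty := by
      intro m
      set P : Finset ℕ := (Finset.range m).filter (fun k => ε k = false) with hP
      set Q : Finset ℕ := (Finset.range m).filter (fun k => ε k = true) with hQ
      have hdisj : Disjoint (P.image d) (Q.image d) := by
        rw [Finset.disjoint_left]
        rintro n hn hn'
        obtain ⟨k, hk, rfl⟩ := Finset.mem_image.1 hn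
        obtain ⟨k', hk', heq⟩ := Finset.mem_image.1 hn'
        have : k' = k := hdmono.injective heq
        subst this
        have h1 := (Finset.mem_filter.1 hk).2
        have h2 := (Finset.mem_filter.1 hk').2
        simp_all
      obtain ⟨x, hx1, hx2⟩ := hind (P.image d) (Q.image d) hdisj
      refine ⟨x, ?_⟩
      simp only [hT, Set.mem_iInter, Finset.mem_range]
      intro k hk
      rw [hS]
      dsimp only
      split
      · rename_i hc
        have hkQ : k ∈ Q := Finset.mem_filter.2 ⟨Finset.mem_range.2 hk, by simpa using hc⟩
        have hlt : b < f (g (d k) • x) :=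
          Set.mem_iInter₂.1 hx2 (d k) (Finset.mem_image_of_mem d hkQ)
        exact le_of_lt hlt
      · rename_i hc
        have hkP : k ∈ P := Finset.mem_filter.2 ⟨Finset.mem_range.2 hk, by simpa using hc⟩
        have hlt : f (g (d k) • x) < a :=
          Set.mem_iInter₂.1 hx1 (d k) (Finset.mem_image_of_mem d hkP)
        exact le_of_lt hlt
    have hTclosed : ∀ m, IsClosed (T m) := by
      intro m
      exact isClosed_iInter (fun k => isClosed_iInter (fun _ => hSclosed k))
    obtain ⟨x, hx⟩ := IsCompact.nonempty_iInter_of_sequence_nonempty_isCompact_isClosed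
      T hTsub hTne ((hTclosed 0).isCompact) hTclosed
    refine ⟨x, fun k => ⟨?_, ?_⟩⟩
    · intro hc
      have hxk : x ∈ S k := by
        have := Set.mem_iInter.1 hx (k+1)
        simp only [hT, Set.mem_iInter, Finset.mem_range] at this
        exact this k (by omega)
      rw [hS] at hxk
      dsimp only at hxk
      rw [hc] at hxk
      simpa using hxk
    · intro hc
      have hxk : x ∈ S k := by
        have := Set.mem_iInter.1 hx (k+1)
        simp only [hT, Set.mem_iInter, Finset.mem_range] at this
        exact this k (by omega)
      rw [hS] at hxk
      dsimp only at hxk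
      rw [hc] at hxk
      simpa using hxk
  choose xe hxe using hscheme
  have hxeinj : ∀ ε ε' : ℕ → Bool, ε ≠ ε' → xe ε ≠ xe ε' := by
    intro ε ε' hne heq
    obtain ⟨k, hk⟩ := Function.ne_iff.1 hne
    have h1 := hxe ε k
    have h2 := hxe ε' k
    rw [heq] at h1
    cases hc : ε k
    · have hc' : ε' k = true := by
        cases hcc : ε' k
        · exact absurd (by rw [hc, hcc]) hk
        · rfl
      exact absurd hab (not_lt.2 (le_trans (h2.2 hc') (h1.1 hc)))
    · have hc' : ε' k = false := by
        cases hcc : ε' k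
        · rfl
        · exact absurd (by rw [hc, hcc]) hk
      exact absurd hab (not_lt.2 (le_trans (h1.2 hc) (h2.1 hc')))
  set E : Set (ℕ → Bool) :=
    {ε | {k | ε k = false}.Infinite ∧ {k | ε k = true}.Infinite} with hE
  set C₀ : Set X := {x : X | π ⁻¹' {π x} = {x}}ᶜ with hC₀
  have hkey : ∀ ε ∈ E, ∃ uu : X, uu ∈ C₀ ∧ π uu = q (π (xe ε)) := by
    intro ε hε
    set α : ℕ → ℕ := Nat.nth (fun k => ε k = false) with hα
    have hαmono : StrictMono α := Nat.nth_strictMono hε.1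
    have hαmem : ∀ t, ε (α t) = false := fun t => Nat.nth_mem_of_infinite hε.1 t
    set β : ℕ → ℕ := Nat.nth (fun k => ε k = true) with hβ
    have hβmono : StrictMono β := Nat.nth_strictMono hε.2
    have hβmem : ∀ t, ε (β t) = true := fun t => Nat.nth_mem_of_infinite hε.2 t
    obtain ⟨uu, -, θ, hθ, hθt⟩ := IsCompact.tendsto_subseq
      (x := fun t => g (d (α t)) • xe ε) isCompact_univ (fun t => Set.mem_univ _)
    obtain ⟨vv, -, θ', hθ', hθ't⟩ := IsCompact.tendsto_subseq
      (x := fun t => g (d (β t)) • xe ε) isCompact_univ (fun t => Set.mem_univ _)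
    have hfu : f uu ≤ a :=
      le_of_tendsto ((hf.tendsto uu).comp hθt)
        (Eventually.of_forall (fun t => (hxe ε (α (θ t))).1 (hαmem (θ t))))
    have hfv : b ≤ f vv :=
      ge_of_tendsto ((hf.tendsto vv).comp hθ't)
        (Eventually.of_forall (fun t => (hxe ε (β (θ' t))).2 (hβmem (θ' t))))
    have hπu : π uu = q (π (xe ε)) := by
      have h1 : Tendsto (fun t => π (g (d (α (θ t))) • xe ε)) atTop (𝓝 (π uu)) :=
        (hπcont.tendsto uu).comp hθt
      have h2 : Tendsto (fun t => g (d (α (θ t))) • (π (xe ε))) atTop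
          (𝓝 (q (π (xe ε)))) :=
        (hq (π (xe ε))).comp ((hαmono.comp hθ).tendsto_atTop)
      have heq : (fun t => π (g (d (α (θ t))) • xe ε)) =
          fun t => g (d (α (θ t))) • (π (xe ε)) := funext fun t => hπequiv _ _
      rw [heq] at h1
      exact tendsto_nhds_unique h1 h2
    have hπv : π vv = q (π (xe ε)) := by
      have h1 : Tendsto (fun t => π (g (d (β (θ' t))) • xe ε)) atTop (𝓝 (π vv)) :=
        (hπcont.tendsto vv).comp hθ't
      have h2 : Tendsto (fun t => g (d (β (θ' t))) • (π (xe ε))) atTop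
          (𝓝 (q (π (xe ε)))) :=
        (hq (π (xe ε))).comp ((hβmono.comp hθ').tendsto_atTop)
      have heq : (fun t => π (g (d (β (θ' t))) • xe ε)) =
          fun t => g (d (β (θ' t))) • (π (xe ε)) := funext fun t => hπequiv _ _
      rw [heq] at h1
      exact tendsto_nhds_unique h1 h2
    have hneq : uu ≠ vv := by
      intro h
      rw [h] at hfu
      exact absurd hab (not_lt.2 (le_trans hfv hfu))
    refine ⟨uu, ?_, hπu⟩
    simp only [hC₀, Set.mem_compl_iff, Set.mem_setOf_eq]
    intro hsingle
    have hvmem : vv ∈ π ⁻¹' {π uu} := by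
      simp only [Set.mem_preimage, Set.mem_singleton_iff]
      rw [hπv, hπu]
    rw [hsingle] at hvmem
    exact hneq (Set.mem_singleton_iff.1 hvmem).symm
  choose! uu huuC huuπ using hkey
  -- E is uncountable
  have hEuncount : ¬ E.Countable := by
    intro hEc
    have hcompl : Eᶜ ⊆ {ε : ℕ → Bool | {k | ε k = false}.Finite} ∪
        {ε : ℕ → Bool | {k | ε k = true}.Finite} := by
      intro ε hε
      simp only [hE, Set.mem_compl_iff, Set.mem_setOf_eq, not_and_or] at hε
      rcases hε with h | h
      · exact Or.inl (Set.not_infinite.1 h)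
      · exact Or.inr (Set.not_infinite.1 h)
    have : (Set.univ : Set (ℕ → Bool)).Countable := by
      rw [← Set.union_compl_self E]
      exact hEc.union (Set.Countable.mono hcompl
        ((GP17.countable_finite_pred false).union (GP17.countable_finite_pred true)))
    exact GP17.not_countable_univ_fun this
  -- stabilize u
  obtain ⟨u₀, hu₀C, hS₁⟩ := GP17.uncount_fiber hEuncount uu huuC hstrong
  set S₁ : Set (ℕ → Bool) := {ε ∈ E | uu ε = u₀} with hS₁def
  -- stabilize the base point
  have hS₁fib : ∀ ε ∈ S₁, π (xe ε) ∈ q ⁻¹' {π u₀} := by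
    rintro ε ⟨hεE, hεu⟩
    simp only [Set.mem_preimage, Set.mem_singleton_iff]
    rw [← hεu]
    exact (huuπ ε hεE).symm
  obtain ⟨y₀, hy₀, hS₂⟩ := GP17.uncount_fiber hS₁ (fun ε => π (xe ε)) hS₁fib
    (hfib q hqcl (π u₀))
  set S₂ : Set (ℕ → Bool) := {ε ∈ S₁ | π (xe ε) = y₀} with hS₂def
  -- the fiber over y₀ contains two distinct points
  have hS₂ne : S₂.Nonempty := by
    by_contra h0
    rw [Set.not_nonempty_iff_eq_empty] at h0
    exact hS₂ (by rw [h0]; exact Set.countable_empty)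
  obtain ⟨ε₁, hε₁⟩ := hS₂ne
  have hε₂ : ∃ ε₂ ∈ S₂, ε₂ ≠ ε₁ := by
    by_contra h
    push_neg at h
    exact hS₂ ((Set.countable_singleton ε₁).mono (fun ε hε => h ε hε))
  obtain ⟨ε₂, hε₂S, hε₂ne⟩ := hε₂
  have hx12 : xe ε₁ ≠ xe ε₂ := hxeinj ε₁ ε₂ (Ne.symm hε₂ne)
  have hfib2 : ∀ z : X, π z = y₀ → z ∈ C₀ := by
    intro z hz
    simp only [hC₀, Set.mem_compl_iff, Set.mem_setOf_eq]
    intro hsingle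
    rw [hz] at hsingle
    have h1 : xe ε₁ ∈ π ⁻¹' {y₀} := by
      simp only [Set.mem_preimage, Set.mem_singleton_iff]
      exact hε₁.2
    have h2 : xe ε₂ ∈ π ⁻¹' {y₀} := by
      simp only [Set.mem_preimage, Set.mem_singleton_iff]
      exact hε₂S.2
    rw [hsingle] at h1 h2
    exact hx12 (h1.trans h2.symm)
  -- but then S₂ would be countable
  refine hS₂ ?_
  have himg : xe '' S₂ ⊆ C₀ := by
    rintro x ⟨ε, hε, rfl⟩
    exact hfib2 (xe ε) hε.2
  refine Set.countable_of_injective_of_countable_image ?_ (hstrong.mono himg)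
  intro ε hε ε' hε' heq
  by_contra hne
  exact hxeinj ε ε' hne heq
end

section
/- Let G be a topological group acting continuously on compact metric spaces X and Y, and let π : X → Y be a continuous G-equivariant map such that there exist countable subsets X₁ ⊆ X and Y₁ ⊆ Y for which π restricts to a bijection from X ∖ X₁ onto Y ∖ Y₁ (a strong almost 1-1 equivalence). Assume the G-system Y is equicontinuous, i.e. the family of translation maps {y ↦ g·y : g ∈ G} is equicontinuous. Then the G-system X is tame: for every continuous f : X → ℝ the family {x ↦ f(g·x) : g ∈ G} contains no independent sequence. -/
open Filter Topology

private lemma aux_not_countable_nat_bool : ¬ Countable (ℕ → Bool) := by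
  intro hc
  obtain ⟨u, hu⟩ := Countable.exists_injective_nat (ℕ → Bool)
  classical
  have hinj : Function.Injective (fun s : Set ℕ => fun n => decide (n ∈ s)) := by
    intro s t hst
    ext n
    have := congrFun hst n
    simpa [decide_eq_decide] using this
  exact Function.cantor_injective _ (hu.comp hinj)

theorem stmt17 {G X Y : Type*} [Group G] [TopologicalSpace G] [IsTopologicalGroup G]
    [MetricSpace X] [CompactSpace X] [MetricSpace Y] [CompactSpace Y]
    [MulAction G X] [MulAction G Y] [ContinuousSMul G X] [ContinuousSMul G Y]
    (π : X → Y) (hπcont : Continuous π) (hπequiv : ∀ (g : G) (x : X), π (g • x) = g • π x)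
    -- strong almost 1-1 equivalence: `π` restricts to a bijection `X ∖ X₁ → Y ∖ Y₁`
    -- with `X₁`, `Y₁` countable
    (hstrong : ∃ (X₁ : Set X) (Y₁ : Set Y), X₁.Countable ∧ Y₁.Countable ∧
      Set.BijOn π X₁ᶜ Y₁ᶜ)
    -- the `G`-system `Y` is equicontinuous
    (hequi : Equicontinuous fun g : G => fun y : Y => g • y) :
    -- then the `G`-system `X` is tame
    ∀ f : X → ℝ, Continuous f →
      ¬ ∃ g : ℕ → G, IsIndependentSeq fun n (x : X) => f (g n • x) := by
  classical
  rintro f hf ⟨g, a, b, hab, hind⟩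
  obtain ⟨X₁, Y₁, hX₁c, hY₁c, hbij⟩ := hstrong
  -- uniform equicontinuity of the `Y`-translations
  have huec := CompactSpace.uniformEquicontinuous_of_equicontinuous hequi
  rw [Metric.uniformEquicontinuous_iff] at huec
  -- a subsequence of the translations converging pointwise on `Y` (Arzelà–Ascoli)
  obtain ⟨h, φ, hφ, hptwise⟩ : ∃ (h : BoundedContinuousFunction Y Y) (φ : ℕ → ℕ),
      StrictMono φ ∧ ∀ y : Y, Tendsto (fun k => g (φ k) • y) atTop (𝓝 (h y)) := by
    set T : ℕ → BoundedContinuousFunction Y Y := fun n =>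
      BoundedContinuousFunction.mkOfCompact ⟨fun y => g n • y, continuous_const_smul _⟩ with hT
    have h1 : Equicontinuous fun n : ℕ => ((T n : Y → Y)) := hequi.comp g
    have hA : Equicontinuous ((↑) : (Set.range T) → Y → Y) := by
      have hfun : ((↑) : (Set.range T) → Y → Y)
          = (fun n : ℕ => ((T n : Y → Y))) ∘ fun i : Set.range T => i.2.choose := by
        funext i
        simp only [Function.comp]
        rw [i.2.choose_spec]
      rw [hfun]
      exact h1.comp _
    have hcomp : IsCompact (closure (Set.range T)) :=
      BoundedContinuousFunction.arzela_ascoli Set.univ isCompact_univ _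
        (fun _ _ _ => Set.mem_univ _) hA
    obtain ⟨h, -, φ, hφ, hlim⟩ :=
      hcomp.isSeqCompact (fun n => subset_closure (Set.mem_range_self n))
    refine ⟨h, φ, hφ, fun y => ?_⟩
    have := ((continuous_eval_const (F := BoundedContinuousFunction Y Y) y).tendsto h).comp hlim
    simpa [T, Function.comp_def] using this
  -- the limit map `h` is injective
  have hinj : Function.Injective h := by
    intro y y' hyy'
    by_contra hne
    have hpos : 0 < dist y y' := dist_pos.2 hne
    obtain ⟨δ, hδ, hub⟩ := huec (dist y y') hpos
    have hd : Tendsto (fun k => dist (g (φ k) • y) (g (φ k) • y')) atTop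
        (𝓝 (dist (h y) (h y'))) := (hptwise y).dist (hptwise y')
    rw [hyy', dist_self] at hd
    obtain ⟨k, hk⟩ := (hd.eventually (gt_mem_nhds hδ)).exists
    have := hub _ _ hk ((g (φ k))⁻¹)
    simp only [inv_smul_smul] at this
    exact lt_irrefl _ this
  -- the constraint pattern: at `2k` follow `σ k`, at `2k+1` follow `!σ k`
  set e : (ℕ → Bool) → ℕ → Bool := fun σ m => if Even m then σ (m / 2) else !σ (m / 2)
    with hedef
  have he1 : ∀ σ k, e σ (2 * k) = σ k := by
    intro σ k
    simp [hedef, Nat.mul_div_cancel_left]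
  have he2 : ∀ σ k, e σ (2 * k + 1) = !σ k := by
    intro σ k
    have hodd : ¬ Even (2 * k + 1) := by
      simp [Nat.even_add_one]
    have hdiv : (2 * k + 1) / 2 = k := by omega
    simp [hedef, hodd, hdiv]
  -- for every `σ` a point of `X` realizing the constraints
  have hxex : ∀ σ : ℕ → Bool, ∃ x : X, ∀ m,
      (e σ m = true → f (g (φ m) • x) ≤ a) ∧ (e σ m = false → b ≤ f (g (φ m) • x)) := by
    intro σ
    set S : ℕ → Set X := fun m =>
      if e σ m = true then {x | f (g (φ m) • x) ≤ a} else {x | b ≤ f (g (φ m) • x)} with hSdef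
    have hSclosed : ∀ m, IsClosed (S m) := by
      intro m
      simp only [hSdef]
      split
      · exact isClosed_le (hf.comp (continuous_const_smul _)) continuous_const
      · exact isClosed_le continuous_const (hf.comp (continuous_const_smul _))
    have hSne : ∀ n : ℕ, (⋂ m ∈ Finset.range (n + 1), S m).Nonempty := by
      intro n
      set P := ((Finset.range (n + 1)).filter (fun m => e σ m = true)).image φ with hP
      set M := ((Finset.range (n + 1)).filter (fun m => e σ m = false)).image φ with hM
      have hdisj : Disjoint P M := by
        rw [Finset.disjoint_left]
        rintro j hjP hjM
        simp only [hP, hM, Finset.mem_image, Finset.mem_filter, Finset.mem_range] at hjP hjM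
        obtain ⟨m₁, ⟨-, h₁⟩, rfl⟩ := hjP
        obtain ⟨m₂, ⟨-, h₂⟩, hm⟩ := hjM
        rw [hφ.injective hm] at h₂
        rw [h₁] at h₂
        exact Bool.noConfusion h₂
      obtain ⟨z, hz1, hz2⟩ := hind P M hdisj
      refine ⟨z, Set.mem_iInter₂.2 fun m hm => ?_⟩
      simp only [hSdef]
      by_cases hbm : e σ m = true
      · rw [if_pos hbm]
        have hmP : φ m ∈ P :=
          Finset.mem_image_of_mem _ (Finset.mem_filter.2 ⟨hm, hbm⟩)
        exact le_of_lt (show f (g (φ m) • z) < a from Set.mem_iInter₂.1 hz1 (φ m) hmP)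
      · rw [if_neg hbm]
        have hmM : φ m ∈ M := by
          refine Finset.mem_image_of_mem _ (Finset.mem_filter.2 ⟨hm, ?_⟩)
          simpa using hbm
        exact le_of_lt (show b < f (g (φ m) • z) from Set.mem_iInter₂.1 hz2 (φ m) hmM)
    set t : ℕ → Set X := fun n => ⋂ m ∈ Finset.range (n + 1), S m with htdef
    have hdec : ∀ n, t (n + 1) ⊆ t n := by
      intro n z hz
      refine Set.mem_iInter₂.2 fun m hm => ?_
      exact Set.mem_iInter₂.1 hz m (Finset.mem_range.2 (lt_trans (Finset.mem_range.1 hm)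
        (Nat.lt_succ_self _)))
    have hcl : ∀ n, IsClosed (t n) := fun n => isClosed_biInter fun m _ => hSclosed m
    obtain ⟨z, hz⟩ := IsCompact.nonempty_iInter_of_sequence_nonempty_isCompact_isClosed t
      hdec hSne ((hcl 0).isCompact) hcl
    refine ⟨z, fun m => ?_⟩
    have hzm : z ∈ S m := by
      have : z ∈ t m := Set.mem_iInter.1 hz m
      exact Set.mem_iInter₂.1 this m (Finset.self_mem_range_succ m)
    constructor
    · intro hb'
      simpa only [hSdef, if_pos hb', Set.mem_setOf_eq] using hzm
    · intro hb'
      have : ¬ (e σ m = true) := by simp [hb']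
      simpa only [hSdef, if_neg this, Set.mem_setOf_eq] using hzm
  choose x hx using hxex
  -- `x` is injective
  have hxinj : Function.Injective x := by
    intro σ τ hxy
    funext k
    by_contra hk
    have h1 := hx σ (2 * k)
    have h2 := hx τ (2 * k)
    rw [hxy] at h1
    rw [he1] at h1 h2
    cases hσk : σ k <;> cases hτk : τ k
    · exact hk (hσk.trans hτk.symm)
    · have hb1 := h1.2 hσk
      have hb2 := h2.1 hτk
      linarith
    · have hb1 := h1.1 hσk
      have hb2 := h2.2 hτk
      linarith
    · exact hk (hσk.trans hτk.symm)
  -- the countable "bad" set in `Y`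
  set Y₂ : Set Y := Y₁ ∪ π '' X₁ with hY₂def
  have hY₂c : Y₂.Countable := hY₁c.union (hX₁c.image π)
  -- fibers of `π` are countable
  have hfib : ∀ y : Y, (π ⁻¹' {y}).Countable := by
    intro y
    have hsub : π ⁻¹' {y} ⊆ X₁ ∪ (X₁ᶜ ∩ π ⁻¹' {y}) := by
      intro u hu
      by_cases h1 : u ∈ X₁
      · exact Or.inl h1
      · exact Or.inr ⟨h1, hu⟩
    refine (hX₁c.union (Set.Subsingleton.countable ?_)).mono hsub
    rintro u ⟨hu1, hu2⟩ v ⟨hv1, hv2⟩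
    have hu2' : π u = y := hu2
    have hv2' : π v = y := hv2
    exact hbij.injOn hu1 hv1 (hu2'.trans hv2'.symm)
  -- key claim: `h (π (x σ))` always lies in the countable bad set
  have hclaim : ∀ σ : ℕ → Bool, h (π (x σ)) ∈ Y₂ := by
    intro σ
    have key : ∀ s : Bool, ∃ u : X, π u = h (π (x σ)) ∧
        (s = true → f u ≤ a) ∧ (s = false → b ≤ f u) := by
      intro s
      have hinf : {m | e σ m = s}.Infinite := by
        apply Set.infinite_of_injective_forall_mem
          (f := fun k : ℕ => if σ k = s then 2 * k else 2 * k + 1)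
        · intro k l hkl
          by_cases h1 : σ k = s <;> by_cases h2 : σ l = s <;>
            simp only [h1, h2, if_true, if_false, if_pos, if_neg] at hkl <;> omega
        · intro k
          by_cases h1 : σ k = s
          · rw [if_pos h1]
            show e σ (2 * k) = s
            rw [he1]; exact h1
          · rw [if_neg h1]
            show e σ (2 * k + 1) = s
            rw [he2]
            cases s <;> cases hσk : σ k <;> simp_all
      set ψ : ℕ → ℕ := fun j => Nat.nth (fun m => e σ m = s) j with hψdef
      have hψmono : StrictMono ψ := Nat.nth_strictMono hinf
      have hψmem : ∀ j, e σ (ψ j) = s := fun j => Nat.nth_mem_of_infinite hinf j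
      obtain ⟨u, -, ξ, hξ, hul⟩ := isCompact_univ.tendsto_subseq
        (x := fun j => g (φ (ψ j)) • x σ) (fun j => Set.mem_univ _)
      refine ⟨u, ?_, ?_, ?_⟩
      · have h1 : Tendsto (fun j => π (g (φ (ψ (ξ j))) • x σ)) atTop (𝓝 (π u)) :=
          (hπcont.tendsto u).comp hul
        have h2 : Tendsto (fun j => π (g (φ (ψ (ξ j))) • x σ)) atTop (𝓝 (h (π (x σ)))) := by
          have hrw : (fun j => π (g (φ (ψ (ξ j))) • x σ))
              = (fun k => g (φ k) • π (x σ)) ∘ (fun j => ψ (ξ j)) := by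
            funext j
            simp [Function.comp, hπequiv]
          rw [hrw]
          exact (hptwise (π (x σ))).comp ((hψmono.comp hξ).tendsto_atTop)
        exact tendsto_nhds_unique h1 h2
      · intro hs
        have hflim : Tendsto (fun j => f (g (φ (ψ (ξ j))) • x σ)) atTop (𝓝 (f u)) :=
          (hf.tendsto u).comp hul
        refine le_of_tendsto hflim (Eventually.of_forall fun j => ?_)
        exact (hx σ (ψ (ξ j))).1 (by rw [hψmem (ξ j), hs])
      · intro hs
        have hflim : Tendsto (fun j => f (g (φ (ψ (ξ j))) • x σ)) atTop (𝓝 (f u)) :=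
          (hf.tendsto u).comp hul
        refine ge_of_tendsto hflim (Eventually.of_forall fun j => ?_)
        exact (hx σ (ψ (ξ j))).2 (by rw [hψmem (ξ j), hs])
    obtain ⟨u, hu1, hu2, -⟩ := key true
    obtain ⟨v, hv1, -, hv2⟩ := key false
    have hu2 : f u ≤ a := hu2 rfl
    have hv2 : b ≤ f v := hv2 rfl
    by_cases hw : h (π (x σ)) ∈ Y₁
    · exact Or.inl hw
    · have huv : u ≠ v := by
        intro hEq
        rw [hEq] at hu2
        linarith
      have hX : u ∈ X₁ ∨ v ∈ X₁ := by
        by_contra hcon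
        push_neg at hcon
        exact huv (hbij.injOn hcon.1 hcon.2 (hu1.trans hv1.symm))
      rcases hX with h1 | h1
      · exact Or.inr ⟨u, h1, hu1⟩
      · exact Or.inr ⟨v, h1, hv1⟩
  -- endgame: the `x σ` all lie in a countable set, contradiction
  have hCc : ((⇑h) ⁻¹' Y₂).Countable := hY₂c.preimage hinj
  have hKc : (π ⁻¹' ((⇑h) ⁻¹' Y₂)).Countable := by
    rw [← Set.biUnion_preimage_singleton]
    exact Set.Countable.biUnion hCc fun y _ => hfib y
  have hunivc : (Set.univ : Set (ℕ → Bool)).Countable :=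
    (hKc.preimage hxinj).mono fun σ _ => hclaim σ
  exact aux_not_countable_nat_bool (Set.countable_univ_iff.mp hunivc)
end

section
/- Let d ≥ 2 and let α = (α₁, …, α_d) ∈ ℝ^d be such that 1, α₁, …, α_d are linearly independent over ℚ. Then there exists a radius r > 0 such that every Euclidean sphere of radius r in ℝ^d contains only finitely many points of the set {n·α + m : n ∈ ℤ, m ∈ ℤ^d}; that is, for every y ∈ ℝ^d the set {(n, m) ∈ ℤ × ℤ^d : ‖n·α + m − y‖ = r} is finite, where ‖·‖ is the Euclidean norm on ℝ^d. -/
noncomputable def gm (d : ℕ) (α : Fin d → ℝ) (p : ℤ × (Fin d → ℤ)) :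
    EuclideanSpace ℝ (Fin d) := WithLp.toLp 2 (fun i => (p.1 : ℝ) * α i + (p.2 i : ℝ))

lemma coord_le_norm {d : ℕ} (x : EuclideanSpace ℝ (Fin d)) (i : Fin d) : |x i| ≤ ‖x‖ := by
  rw [EuclideanSpace.norm_eq]
  have h1 : |x i| = Real.sqrt (‖x i‖ ^ 2) := by
    rw [Real.sqrt_sq_eq_abs]; simp [abs_abs]
  rw [h1]
  apply Real.sqrt_le_sqrt
  apply Finset.single_le_sum (f := fun j => ‖x j‖ ^ 2) (fun j _ => by positivity)
    (Finset.mem_univ i)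

set_option maxHeartbeats 1000000 in
lemma key (d : ℕ) (α : Fin d → ℝ)
    (hindep : LinearIndependent ℚ (Matrix.vecCons (1 : ℝ) α))
    (W : Submodule ℝ (EuclideanSpace ℝ (Fin d))) (hW : W ≠ ⊤) (C : ℝ) :
    {q : ℤ × (Fin d → ℤ) | gm d α q ∈ W ∧ ‖gm d α q‖ ≤ C}.Finite := by
  classical
  set E := EuclideanSpace ℝ (Fin d)
  set αE : E := (WithLp.toLp 2 α : EuclideanSpace ℝ (Fin d)) with hαE
  set T : (ℝ × E) →ₗ[ℝ] E :=
    (LinearMap.fst ℝ ℝ E).smulRight αE + LinearMap.snd ℝ ℝ E with hT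
  have hTval : ∀ v : ℝ × E, T v = v.1 • αE + v.2 := fun v => rfl
  set ι : ℤ × (Fin d → ℤ) → ℝ × E :=
    fun q => ((q.1 : ℝ), (WithLp.toLp 2 (fun i => (q.2 i : ℝ)) : EuclideanSpace ℝ (Fin d))) with hι
  have hTι : ∀ q, T (ι q) = gm d α q := by
    intro q
    rw [hTval]
    ext i
    show (q.1 : ℝ) • α i + ((q.2 i : ℝ)) = _
    simp [gm]
  set Γ : Set (ℤ × (Fin d → ℤ)) := {q | gm d α q ∈ W} with hΓ
  set V : Submodule ℝ (ℝ × E) := Submodule.span ℝ (ι '' Γ) with hV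
  have hTV : Submodule.map T V ≤ W := by
    rw [hV, Submodule.map_span, Submodule.span_le]
    rintro x ⟨v, ⟨q, hq, rfl⟩, rfl⟩
    rw [hTι]; exact hq
  have hVtop : V ≠ ⊤ := by
    intro h
    apply hW
    rw [eq_top_iff]
    intro x _
    have : x ∈ Submodule.map T V := by
      rw [h]
      exact ⟨(0, x), trivial, by rw [hTval]; simp⟩
    exact hTV this
  obtain ⟨b, hbΓ, hbspan, hbind⟩ := exists_linearIndependent ℝ (ι '' Γ)
  rw [← hV] at hbspan
  have hbfin : b.Finite := by
    have := hbind.finite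
    exact Set.toFinite b
  haveI : Fintype b := hbfin.fintype
  have hcard : Fintype.card b < d + 1 := by
    have h1 : Module.finrank ℝ V < Module.finrank ℝ (ℝ × E) :=
      Submodule.finrank_lt hVtop
    have h2 : Module.finrank ℝ (ℝ × E) = 1 + d := by
      rw [Module.finrank_prod, Module.finrank_self, finrank_euclideanSpace_fin]
    have h3 : Module.finrank ℝ V = b.toFinset.card := by
      rw [← hbspan]; exact finrank_span_set_eq_card hbind
    rw [Set.toFinset_card] at h3
    omega
  have hlift : ∀ v : b, ∃ q : ℤ × (Fin d → ℤ), ι q = (v : ℝ × E) := by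
    rintro ⟨v, hv⟩
    obtain ⟨q, _, rfl⟩ := hbΓ hv
    exact ⟨q, rfl⟩
  choose Q hQ using hlift
  set Lq : (ℚ × (Fin d → ℚ)) →ₗ[ℚ] (b → ℚ) :=
    LinearMap.pi (fun v => ((Q v).1 : ℚ) • LinearMap.fst ℚ ℚ (Fin d → ℚ) +
      ∑ i, ((Q v).2 i : ℚ) • (LinearMap.proj i).comp (LinearMap.snd ℚ ℚ (Fin d → ℚ))) with hLq
  have hLqval : ∀ (c : ℚ × (Fin d → ℚ)) (v : b),
      Lq c v = ((Q v).1 : ℚ) * c.1 + ∑ i, ((Q v).2 i : ℚ) * c.2 i := by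
    intro c v
    rw [hLq]
    simp [LinearMap.pi_apply, LinearMap.sum_apply]
  have hLqnotinj : ¬ Function.Injective Lq := by
    intro h
    have h1 := LinearMap.finrank_le_finrank_of_injective h
    rw [Module.finrank_prod, Module.finrank_self, Module.finrank_pi, Module.finrank_pi] at h1
    simp at h1
    have := Set.ncard_eq_toFinset_card' b
    rw [Set.toFinset_card] at this
    omega
  have hker : ∃ c : ℚ × (Fin d → ℚ), c ≠ 0 ∧ Lq c = 0 := by
    by_contra h
    push_neg at h
    apply hLqnotinj
    have : LinearMap.ker Lq = ⊥ := by
      rw [Submodule.eq_bot_iff]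
      intro c hc
      by_contra hc0
      exact absurd (LinearMap.mem_ker.mp hc) (h c hc0)
    exact LinearMap.ker_eq_bot.mp this
  obtain ⟨c, hc0, hcL⟩ := hker
  set φ : (ℝ × E) →ₗ[ℝ] ℝ :=
    ((c.1 : ℝ)) • LinearMap.fst ℝ ℝ E +
      ∑ i, ((c.2 i : ℝ)) • (LinearMap.proj (φ := fun _ : Fin d => ℝ) i).comp
        ((WithLp.linearEquiv 2 ℝ (Fin d → ℝ)).toLinearMap.comp (LinearMap.snd ℝ ℝ E)) with hφ
  have hφval : ∀ v : ℝ × E, φ v = (c.1 : ℝ) * v.1 + ∑ i, (c.2 i : ℝ) * v.2 i := by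
    intro v
    rw [hφ]
    simp only [LinearMap.add_apply, LinearMap.smul_apply, LinearMap.sum_apply,
      LinearMap.coe_comp, Function.comp_apply, smul_eq_mul]
    first
    | rfl
    | (congr 1
       exact Finset.sum_congr rfl fun i _ => rfl)
  have hφb : ∀ v ∈ b, φ v = 0 := by
    intro v hv
    have h1 : ι (Q ⟨v, hv⟩) = v := hQ ⟨v, hv⟩
    have h2 : φ (ι (Q ⟨v, hv⟩)) = (((Q ⟨v, hv⟩).1 : ℝ)) * (c.1 : ℝ) +
        ∑ i, ((Q ⟨v, hv⟩).2 i : ℝ) * (c.2 i : ℝ) := by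
      rw [hφval]
      rw [mul_comm]
      congr 1
      apply Finset.sum_congr rfl
      intro i _
      show (c.2 i : ℝ) * ((Q ⟨v, hv⟩).2 i : ℝ) = _
      ring
    rw [h1] at h2
    have h3 : ((Lq c ⟨v, hv⟩ : ℚ) : ℝ) = 0 := by rw [hcL]; simp
    rw [hLqval] at h3
    push_cast at h3
    rw [h2, h3]
  have hφV : ∀ v ∈ V, φ v = 0 := by
    intro v hv
    rw [← hbspan] at hv
    have hle : Submodule.span ℝ b ≤ LinearMap.ker φ := by
      rw [Submodule.span_le]
      intro x hx
      exact LinearMap.mem_ker.mpr (hφb x hx)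
    exact LinearMap.mem_ker.mp (hle hv)
  have hκ : (c.1 : ℝ) - ∑ i, (c.2 i : ℝ) * α i ≠ 0 := by
    intro h
    have hli := Fintype.linearIndependent_iff.mp hindep
      (Fin.cons c.1 (fun i => - c.2 i))
    have hsmul : ∀ (q : ℚ) (x : ℝ), q • x = (q : ℝ) * x := fun q x => by
      rw [Rat.smul_def]
    have hsum : ∑ j : Fin (d + 1), (Fin.cons c.1 (fun i => - c.2 i) : Fin (d+1) → ℚ) j •
        Matrix.vecCons (1 : ℝ) α j = 0 := by
      rw [Fin.sum_univ_succ]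
      simp only [Fin.cons_zero, Fin.cons_succ, Matrix.cons_val_zero, Matrix.cons_val_succ,
        hsmul, Rat.cast_neg, neg_mul, mul_one]
      rw [Finset.sum_neg_distrib]
      linarith [h]
    have hz := hli hsum
    apply hc0
    have h1 : c.1 = 0 := by have := hz 0; simpa using this
    have h2 : c.2 = 0 := by
      funext i
      have := hz i.succ
      simp only [Fin.cons_succ] at this
      exact neg_eq_zero.mp this
    exact Prod.ext h1 h2
  have hdisj : ∀ v ∈ V, T v = 0 → v = 0 := by
    intro v hv hTv
    rw [hTval] at hTv
    have h2 : v.2 = - (v.1 • αE) := by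
      rw [eq_neg_iff_add_eq_zero, add_comm]; exact hTv
    have hφv := hφV v hv
    rw [hφval] at hφv
    have h3 : ∀ i, v.2 i = - (v.1 * α i) := by
      intro i; rw [h2]; rfl
    simp only [h3] at hφv
    have h4 : (c.1 : ℝ) * v.1 + ∑ i, (c.2 i : ℝ) * -(v.1 * α i)
        = v.1 * ((c.1 : ℝ) - ∑ i, (c.2 i : ℝ) * α i) := by
      rw [mul_sub, Finset.mul_sum]
      have : ∑ i, (c.2 i : ℝ) * -(v.1 * α i) = - ∑ i, v.1 * ((c.2 i : ℝ) * α i) := by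
        rw [← Finset.sum_neg_distrib]
        exact Finset.sum_congr rfl fun i _ => by ring
      rw [this]
      ring
    rw [h4] at hφv
    have h5 : v.1 = 0 := by
      rcases mul_eq_zero.mp hφv with h | h
      · exact h
      · exact absurd h hκ
    have h6 : v.2 = 0 := by rw [h2, h5]; simp
    exact Prod.ext h5 h6
  -- antilipschitz bound for T on V
  have hinj : Function.Injective (T.comp V.subtype) := by
    rw [← LinearMap.ker_eq_bot, Submodule.eq_bot_iff]
    rintro ⟨v, hv⟩ hker
    have : T v = 0 := hker
    have := hdisj v hv this
    exact Subtype.ext this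
  set e : V ≃ₗ[ℝ] LinearMap.range (T.comp V.subtype) :=
    LinearEquiv.ofInjective _ hinj with he
  haveI : FiniteDimensional ℝ V := inferInstance
  set e' := e.toContinuousLinearEquiv with he'
  set M : ℝ := ‖(e'.symm : LinearMap.range (T.comp V.subtype) →L[ℝ] V)‖ with hM
  have hbound : ∀ v : V, ‖(v : ℝ × E)‖ ≤ M * ‖T (v : ℝ × E)‖ := by
    intro v
    have h1 : v = e'.symm (e' v) := by simp
    have h2 : ‖v‖ ≤ M * ‖e' v‖ := by
      conv_lhs => rw [h1]
      exact (e'.symm : _ →L[ℝ] V).le_opNorm (e' v)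
    have h3 : ‖e' v‖ = ‖T (v : ℝ × E)‖ := by
      have : ((e' v : LinearMap.range (T.comp V.subtype)) : E) = T (v : ℝ × E) := rfl
      rw [← this]
      rfl
    rw [← h3]
    exact h2.trans_eq (by rw [h3, ← h3])
  -- now bound the integer points
  set N : ℤ := ⌈M * C⌉ with hN
  have hsub : {q : ℤ × (Fin d → ℤ) | gm d α q ∈ W ∧ ‖gm d α q‖ ≤ C} ⊆
      (Set.Icc (-N) N) ×ˢ (Set.pi Set.univ fun _ : Fin d => Set.Icc (-N) N) := by
    rintro q ⟨hqW, hqC⟩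
    have hqV : ι q ∈ V := Submodule.subset_span ⟨q, hqW, rfl⟩
    have h1 : ‖ι q‖ ≤ M * C := by
      have := hbound ⟨ι q, hqV⟩
      simp only [Submodule.coe_mk] at this
      rw [hTι] at this
      calc ‖ι q‖ ≤ M * ‖gm d α q‖ := this
        _ ≤ M * C := by
            apply mul_le_mul_of_nonneg_left hqC
            exact ContinuousLinearMap.opNorm_nonneg _
    have hfst : |((q.1 : ℝ))| ≤ M * C := by
      have : |((q.1 : ℝ))| ≤ ‖ι q‖ := by
        rw [hι]
        exact (le_max_left _ _).trans_eq (Prod.norm_def _).symm |>.trans_eq' (by rw [Real.norm_eq_abs])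
      linarith
    have hsnd : ∀ i, |((q.2 i : ℝ))| ≤ M * C := by
      intro i
      have h2 : |((ι q).2 i)| ≤ ‖(ι q).2‖ := coord_le_norm ((ι q).2) i
      have h3 : ‖(ι q).2‖ ≤ ‖ι q‖ :=
        (le_max_right _ _).trans_eq (Prod.norm_def _).symm
      have h4 : (ι q).2 i = (q.2 i : ℝ) := rfl
      rw [h4] at h2
      linarith
    have hMC : M * C ≤ (N : ℝ) := Int.le_ceil _
    constructor
    · simp only [Set.mem_Icc]
      constructor
      · have : -(N : ℝ) ≤ (q.1 : ℝ) := by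
          have := abs_le.mp (hfst.trans hMC)
          exact this.1
        exact_mod_cast this
      · have : (q.1 : ℝ) ≤ (N : ℝ) := (le_abs_self _).trans (hfst.trans hMC)
        exact_mod_cast this
    · intro i _
      simp only [Set.mem_Icc]
      have hi := (hsnd i).trans hMC
      constructor
      · have : -(N : ℝ) ≤ (q.2 i : ℝ) := (abs_le.mp hi).1
        exact_mod_cast this
      · have : (q.2 i : ℝ) ≤ (N : ℝ) := (abs_le.mp hi).2
        exact_mod_cast this
  exact Set.Finite.subset ((Set.finite_Icc (-N) N).prod
    (Set.Finite.pi fun _ => Set.finite_Icc (-N) N)) hsub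

set_option maxHeartbeats 1000000 in
theorem stmt18 (d : ℕ) (hd : 2 ≤ d) (α : Fin d → ℝ)
    -- `1, α₁, …, α_d` are linearly independent over `ℚ`
    (hindep : LinearIndependent ℚ (Matrix.vecCons (1 : ℝ) α)) :
    -- there is a radius `r > 0` such that every Euclidean sphere of radius `r` in `ℝ^d`
    -- contains only finitely many points of `{n·α + m : n ∈ ℤ, m ∈ ℤ^d}`
    ∃ r : ℝ, 0 < r ∧ ∀ y : Fin d → ℝ,
      {p : ℤ × (Fin d → ℤ) |
        Real.sqrt (∑ i, ((p.1 : ℝ) * α i + (p.2 i : ℝ) - y i) ^ 2) = r}.Finite := by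
  classical
  set Bad : Set ℝ := ⋃ (t : Fin (d+1) → ℤ × (Fin d → ℤ)),
    {r : ℝ | ∃ c : EuclideanSpace ℝ (Fin d),
      AffineIndependent ℝ (fun i => gm d α (t i)) ∧ ∀ i, dist (gm d α (t i)) c = r}
    with hBad
  have hBadc : Bad.Countable := by
    apply Set.countable_iUnion
    intro t
    apply Set.Subsingleton.countable
    rintro r₁ ⟨c₁, hind, h₁⟩ r₂ ⟨c₂, _, h₂⟩
    set s : Affine.Simplex ℝ (EuclideanSpace ℝ (Fin d)) d :=
      ⟨fun i => gm d α (t i), hind⟩ with hs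
    have hsp : affineSpan ℝ (Set.range s.points) = ⊤ := by
      rw [hind.affineSpan_eq_top_iff_card_eq_finrank_add_one]
      simp [finrank_euclideanSpace_fin]
    have e1 : r₁ = s.circumradius :=
      s.eq_circumradius_of_dist_eq (by rw [hsp]; trivial) (fun i => h₁ i)
    have e2 : r₂ = s.circumradius :=
      s.eq_circumradius_of_dist_eq (by rw [hsp]; trivial) (fun i => h₂ i)
    rw [e1, e2]
  have hex : ∃ r : ℝ, 0 < r ∧ r ∉ Bad := by
    by_contra h
    push_neg at h
    have hsub : Set.Ioi (0:ℝ) ⊆ Bad := fun r hr => h r hr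
    have hcnt : (Set.Ioi (0:ℝ)).Countable := hBadc.mono hsub
    have huniv : (Set.univ : Set ℝ).Countable := by
      have hpre : (Real.exp ⁻¹' (Set.Ioi 0)) = Set.univ := by
        ext x; simp [Real.exp_pos]
      have := hcnt.preimage Real.exp_injective
      rw [hpre] at this; exact this
    exact Cardinal.not_countable_real huniv
  obtain ⟨r, hr0, hrB⟩ := hex
  refine ⟨r, hr0, ?_⟩
  intro y
  set yE : EuclideanSpace ℝ (Fin d) := (WithLp.toLp 2 y : EuclideanSpace ℝ (Fin d)) with hyE
  have hset : {p : ℤ × (Fin d → ℤ) |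
        Real.sqrt (∑ i, ((p.1 : ℝ) * α i + (p.2 i : ℝ) - y i) ^ 2) = r}
      = {p | dist (gm d α p) yE = r} := by
    ext p
    simp only [Set.mem_setOf_eq]
    rw [EuclideanSpace.dist_eq]
    have harg : ∑ i, (dist (gm d α p i) (yE i))^2
        = ∑ i, ((p.1:ℝ)*α i + (p.2 i:ℝ) - y i)^2 := by
      apply Finset.sum_congr rfl
      intro i _
      rw [Real.dist_eq, sq_abs]
      rfl
    rw [harg]
  rw [hset]
  set S := {p | dist (gm d α p) yE = r} with hSdef
  rcases Set.eq_empty_or_nonempty S with he | ⟨p₀, hp₀⟩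
  · rw [he]; exact Set.finite_empty
  set G : Set (EuclideanSpace ℝ (Fin d)) := {v | ∃ p ∈ S, v = gm d α p - gm d α p₀}
    with hG
  set W : Submodule ℝ (EuclideanSpace ℝ (Fin d)) := Submodule.span ℝ G with hWdef
  by_cases hWtop : W = ⊤
  · exfalso
    obtain ⟨b, hb1, hb2, hb3⟩ := exists_linearIndependent ℝ G
    rw [← hWdef] at hb2
    have hbfin : b.Finite := by
      have := hb3.finite
      exact Set.toFinite b
    haveI : Fintype b := hbfin.fintype
    have hcardb : Fintype.card b = d := by
      have h1 : Module.finrank ℝ W = d := by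
        rw [hWtop, finrank_top, finrank_euclideanSpace_fin]
      have h3 : Module.finrank ℝ W = b.toFinset.card := by
        rw [← hb2]; exact finrank_span_set_eq_card hb3
      rw [Set.toFinset_card] at h3
      omega
    set e : Fin d ≃ b := (Fintype.equivFinOfCardEq hcardb).symm with he
    have hlift : ∀ v : b, ∃ p, p ∈ S ∧
        gm d α p - gm d α p₀ = (v : EuclideanSpace ℝ (Fin d)) := by
      rintro ⟨v, hv⟩
      obtain ⟨p, hp, hpe⟩ := hb1 hv
      exact ⟨p, hp, hpe.symm⟩
    choose P hPS hPe using hlift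
    set t : Fin (d+1) → ℤ × (Fin d → ℤ) := Fin.cases p₀ (fun i => P (e i)) with ht
    have ht0 : t 0 = p₀ := rfl
    have htsucc : ∀ j : Fin d, t j.succ = P (e j) := fun j => by
      rw [ht]; exact Fin.cases_succ _
    have htS : ∀ i, t i ∈ S := by
      intro i
      induction i using Fin.cases with
      | zero => rw [ht0]; exact hp₀
      | succ j => rw [htsucc]; exact hPS _
    have hind : AffineIndependent ℝ (fun i => gm d α (t i)) := by
      rw [affineIndependent_iff_linearIndependent_vsub ℝ _ 0]
      set u : {x : Fin (d+1) // x ≠ (0 : Fin (d+1))} → b :=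
        fun x => e ((x : Fin (d+1)).pred x.2) with hu
      have hui : Function.Injective u := by
        intro x x' hxx
        have h1 := e.injective hxx
        apply Subtype.ext
        have := congrArg Fin.succ h1
        rwa [Fin.succ_pred, Fin.succ_pred] at this
      have heq : (fun (x : {x : Fin (d+1) // x ≠ (0 : Fin (d+1))}) =>
            gm d α (t x) -ᵥ gm d α (t 0))
          = (fun v : b => (v : EuclideanSpace ℝ (Fin d))) ∘ u := by
        funext x
        have hx : (x : Fin (d+1)) = ((x : Fin (d+1)).pred x.2).succ :=
          (Fin.succ_pred _ _).symm
        show gm d α (t x) -ᵥ gm d α (t 0) = _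
        rw [ht0, hx, htsucc]
        have := hPe (e ((x : Fin (d+1)).pred x.2))
        show gm d α (P (e ((x : Fin (d+1)).pred x.2))) -ᵥ gm d α p₀ = _
        rw [vsub_eq_sub, this]
        rfl
      rw [heq]
      exact hb3.comp u hui
    apply hrB
    rw [hBad]
    apply Set.mem_iUnion.mpr
    exact ⟨t, yE, hind, fun i => htS i⟩
  · have hfin := key d α hindep W hWtop (2*r)
    apply Set.Finite.subset
      (hfin.image (fun q : ℤ × (Fin d → ℤ) => (q.1 + p₀.1, fun i => q.2 i + p₀.2 i)))
    intro p hp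
    have hgm : gm d α (p.1 - p₀.1, fun i => p.2 i - p₀.2 i)
        = gm d α p - gm d α p₀ := by
      ext i
      show ((p.1 - p₀.1 : ℤ) : ℝ) * α i + ((p.2 i - p₀.2 i : ℤ) : ℝ)
        = ((p.1 : ℝ) * α i + (p.2 i : ℝ)) - ((p₀.1 : ℝ) * α i + (p₀.2 i : ℝ))
      push_cast
      ring
    refine ⟨(p.1 - p₀.1, fun i => p.2 i - p₀.2 i), ⟨?_, ?_⟩, ?_⟩
    · rw [hgm]
      exact Submodule.subset_span ⟨p, hp, rfl⟩
    · rw [hgm]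
      have h1 : ‖gm d α p - gm d α p₀‖ = dist (gm d α p) (gm d α p₀) :=
        (dist_eq_norm _ _).symm
      rw [h1]
      calc dist (gm d α p) (gm d α p₀)
          ≤ dist (gm d α p) yE + dist yE (gm d α p₀) := dist_triangle _ _ _
        _ = r + r := by rw [hp, dist_comm, hp₀]
        _ = 2 * r := by ring
    · show ((p.1 - p₀.1) + p₀.1, fun i => (p.2 i - p₀.2 i) + p₀.2 i) = p
      refine Prod.ext ?_ ?_
      · simp
      · funext i
        simp
end

section
/- Let G be a topological group, K ⊆ G a compact subset and H ⊆ G a subgroup such that G = K·H = {k·h : k ∈ K, h ∈ H}, and assume H is Roelcke precompact in G in the sense that for every neighborhood U of the identity in G there exists a finite set F ⊆ H with H ⊆ U·F·U. Then G is Roelcke precompact: for every neighborhood U of the identity in G there exists a finite set F' ⊆ G with G ⊆ U·F'·U. -/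
open scoped Pointwise

theorem stmt19 {G : Type*} [Group G] [TopologicalSpace G] [IsTopologicalGroup G]
    (K : Set G) (hK : IsCompact K) (H : Subgroup G)
    -- `G = K·H`
    (hKH : K * (H : Set G) = Set.univ)
    -- `H` is Roelcke precompact in `G`: for every identity neighborhood `U` there is a
    -- finite `F ⊆ H` with `H ⊆ U·F·U`
    (hH : ∀ U ∈ nhds (1 : G), ∃ F : Set G, F.Finite ∧ F ⊆ (H : Set G) ∧
      (H : Set G) ⊆ U * F * U) :
    -- then `G` is Roelcke precompact: for every identity neighborhood `U` there is a
    -- finite `F' ⊆ G` with `G ⊆ U·F'·U`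
    ∀ U ∈ nhds (1 : G), ∃ F' : Set G, F'.Finite ∧ (Set.univ : Set G) ⊆ U * F' * U := by
  intro U hU
  -- choose U₀ with U₀ * U₀ ⊆ U
  obtain ⟨U₀, hU₀open, hU₀1, hU₀mul⟩ := exists_open_nhds_one_mul_subset hU
  have hU₀nhds : U₀ ∈ nhds (1 : G) := hU₀open.mem_nhds hU₀1
  have hU₀sub : U₀ ⊆ U := fun x hx => hU₀mul ⟨1, hU₀1, x, hx, one_mul x⟩
  -- for each t, conjugated neighborhood
  set V : G → Set G := fun t => (fun v => t * v * t⁻¹) ⁻¹' U₀ with hV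
  have hVnhds : ∀ t : G, V t ∈ nhds (1 : G) := by
    intro t
    have hc : Continuous fun v : G => t * v * t⁻¹ := by continuity
    have : (fun v : G => t * v * t⁻¹) 1 = 1 * 1 := by group
    refine hc.continuousAt.preimage_mem_nhds ?_
    simpa [this] using hU₀nhds
  -- for each t, pick F t via hH applied to V t ∩ U₀
  have key : ∀ t : G, ∃ F : Set G, F.Finite ∧ (H : Set G) ⊆ (V t ∩ U₀) * F * (V t ∩ U₀) := by
    intro t
    obtain ⟨F, hFfin, _, hFsub⟩ := hH (V t ∩ U₀) (Filter.inter_mem (hVnhds t) hU₀nhds)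
    exact ⟨F, hFfin, hFsub⟩
  choose F hFfin hFsub using key
  -- cover K by finitely many U₀ * {t}
  obtain ⟨T, hTK, hTcov⟩ := hK.elim_nhds_subcover (fun t => U₀ * {t}) (by
    intro x _
    have : (· * x) '' U₀ ∈ nhds (1 * x) := by
      exact (Homeomorph.mulRight x).isOpenMap.image_mem_nhds hU₀nhds
    simpa [Set.mul_singleton] using this)
  have hfin : (⋃ t ∈ T, {t} * F t).Finite := by
    apply Set.Finite.biUnion T.finite_toSet
    intro t _
    rw [Set.singleton_mul]
    exact (hFfin t).image _
  refine ⟨⋃ t ∈ T, {t} * F t, hfin, ?_⟩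
  · intro g _
    have hg : g ∈ K * (H : Set G) := hKH ▸ Set.mem_univ g
    obtain ⟨k, hk, h, hh, rfl⟩ := hg
    obtain ⟨t, htT, hkt⟩ := Set.mem_iUnion₂.mp (hTcov hk)
    rw [Set.mul_singleton] at hkt
    obtain ⟨u, hu, huk⟩ := hkt
    obtain ⟨vf, hvf, w, hw, hvfw⟩ := hFsub t hh
    obtain ⟨v, hv, f, hf, hvfeq⟩ := hvf
    -- g = k * h = u * t * (v * f * w) = (u * (t*v*t⁻¹)) * (t * f) * w
    have hdecomp : k * h = (u * (t * v * t⁻¹)) * (t * f) * w := by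
      rw [← huk, ← hvfw, ← hvfeq]; group
    show k * h ∈ (U * ⋃ t ∈ T, {t} * F t) * U
    rw [hdecomp]
    refine ⟨(u * (t * v * t⁻¹)) * (t * f), ⟨u * (t * v * t⁻¹), ?_, t * f, ?_, rfl⟩, w, hU₀sub hw.2, rfl⟩
    · exact hU₀mul ⟨u, hu, t * v * t⁻¹, hv.1, rfl⟩
    · exact Set.mem_biUnion htT ⟨t, rfl, f, hf, rfl⟩
end
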